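/- arXiv:1510.07337 — 5 statements merged into one kernel-verified Lean document; each statement's English description precedes it below -/
import Mathlib

section
/- Let f₁, f₂, f₃, f₄ ∈ Δ_{2,max} be four times continuously differentiable on [−1,1] and satisfy: f₁ ≡ 1 near x = 1 and f₁ ≡ 0 near x = −1; f₂ ≡ 0 near x = 1 and f₂ ≡ 1 near x = −1; f₃(x) = x near x = 1 and f₃ ≡ 0 near x = −1; f₄ ≡ 0 near x = 1 and f₄(x) = x near x = −1. Then f₁, f₂, f₃, f₄ are linearly independent modulo Δ_{2,min}: if α₁, α₂, α₃, α₄ ∈ ℂ and α₁f₁ + α₂f₂ + α₃f₃ + α₄f₄ ∈ Δ_{2,min}, then α₁ = α₂ = α₃ = α₄ = 0. -/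
open MeasureTheory Set Filter

noncomputable section

/-- `f` is locally absolutely continuous on `(-1,1)` with a.e. derivative `f'`,
expressed via the fundamental theorem of calculus. -/
def LocACOn (f f' : ℝ → ℂ) : Prop :=
  ∀ x ∈ Ioo (-1:ℝ) 1, ∀ y ∈ Ioo (-1:ℝ) 1,
    IntervalIntegrable f' volume x y ∧ f y - f x = ∫ t in x..y, f' t

/-- membership in `L²(-1,1)` -/
def L2I (g : ℝ → ℂ) : Prop :=
  MemLp g 2 (volume.restrict (Ioo (-1:ℝ) 1))

/-- the Legendre expression `ℓ[f] = -((1-x²)f′)′ = -(1-x²)f″ + 2x f′`. -/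
def leg (f1 f2 : ℝ → ℂ) (x : ℝ) : ℂ :=
  ((2*x : ℝ) : ℂ) * f1 x - ((1 - x^2 : ℝ) : ℂ) * f2 x

/-- the derivative `(ℓ[f])′ = 2f′ + 4x f″ - (1-x²)f‴`. -/
def legD (f1 f2 f3 : ℝ → ℂ) (x : ℝ) : ℂ :=
  (2 : ℂ) * f1 x + ((4*x : ℝ) : ℂ) * f2 x - ((1 - x^2 : ℝ) : ℂ) * f3 x

/-- the second derivative `(ℓ[f])″ = 6f″ + 6x f‴ - (1-x²)f⁗`. -/
def legDD (f2 f3 f4 : ℝ → ℂ) (x : ℝ) : ℂ :=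
  (6 : ℂ) * f2 x + ((6*x : ℝ) : ℂ) * f3 x - ((1 - x^2 : ℝ) : ℂ) * f4 x

/-- `ℓ²[f] = ((1-x²)²f″)″ - 2((1-x²)f′)′
           = (1-x²)²f⁗ - 8x(1-x²)f‴ + (14x²-6)f″ + 4x f′`. -/
def legSq (f1 f2 f3 f4 : ℝ → ℂ) (x : ℝ) : ℂ :=
  (((1 - x^2)^2 : ℝ) : ℂ) * f4 x - ((8*x*(1 - x^2) : ℝ) : ℂ) * f3 x
    + ((14*x^2 - 6 : ℝ) : ℂ) * f2 x + ((4*x : ℝ) : ℂ) * f1 x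

/-- `((1-x²)²f″)′ = (1-x²)²f‴ - 4x(1-x²)f″`. -/
def sqTermD (f2 f3 : ℝ → ℂ) (x : ℝ) : ℂ :=
  (((1 - x^2)^2 : ℝ) : ℂ) * f3 x - ((4*x*(1 - x^2) : ℝ) : ℂ) * f2 x

/-- `[f,1]₂(x) = ((1-x²)²f″)′ - 2(1-x²)f′`. -/
def bket1 (f1 f2 f3 : ℝ → ℂ) (x : ℝ) : ℂ :=
  sqTermD f2 f3 x - ((2*(1 - x^2) : ℝ) : ℂ) * f1 x

/-- `[f,x]₂(x) = x[f,1]₂(x) - (1-x²)²f″ + 2(1-x²)f`. -/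
def bketX (f f1 f2 f3 : ℝ → ℂ) (x : ℝ) : ℂ :=
  (x : ℂ) * bket1 f1 f2 f3 x - (((1 - x^2)^2 : ℝ) : ℂ) * f2 x
    + ((2*(1 - x^2) : ℝ) : ℂ) * f x

/-- the maximal domain `Δ_{2,max}` of `ℓ²` in `L²(-1,1)`:
`f, f′, f″, f‴` locally absolutely continuous and `f, ℓ²[f] ∈ L²(-1,1)`. -/
def Delta2Max (f f1 f2 f3 f4 : ℝ → ℂ) : Prop :=
  LocACOn f f1 ∧ LocACOn f1 f2 ∧ LocACOn f2 f3 ∧ LocACOn f3 f4 ∧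
    L2I f ∧ L2I (legSq f1 f2 f3 f4)

/-- the filter `x → 1⁻` from within `(-1,1)`. -/
def atOne : Filter ℝ := nhdsWithin 1 (Ioo (-1:ℝ) 1)

/-- the filter `x → -1⁺` from within `(-1,1)`. -/
def atNegOne : Filter ℝ := nhdsWithin (-1) (Ioo (-1:ℝ) 1)

/-- the GKN domain `D(S)`. -/
def DS (f f1 f2 f3 f4 : ℝ → ℂ) : Prop :=
  Delta2Max f f1 f2 f3 f4 ∧
  Tendsto (bket1 f1 f2 f3) atOne (nhds 0) ∧
  Tendsto (bket1 f1 f2 f3) atNegOne (nhds 0) ∧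
  Tendsto (bketX f f1 f2 f3) atOne (nhds 0) ∧
  Tendsto (bketX f f1 f2 f3) atNegOne (nhds 0)

/-- the maximal domain `Δ_{1,max}` of `ℓ` in `L²(-1,1)`. -/
def Delta1Max (f f1 f2 : ℝ → ℂ) : Prop :=
  LocACOn f f1 ∧ LocACOn f1 f2 ∧ L2I f ∧ L2I (leg f1 f2)

/-- the domain `D(A)` of the Legendre polynomials operator. -/
def DA (f f1 f2 : ℝ → ℂ) : Prop :=
  Delta1Max f f1 f2 ∧
  Tendsto (fun x => ((1 - x^2 : ℝ) : ℂ) * f1 x) atOne (nhds 0) ∧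
  Tendsto (fun x => ((1 - x^2 : ℝ) : ℂ) * f1 x) atNegOne (nhds 0)

/-- the algebraic domain `D(A²) = {f ∈ D(A) : ℓ[f] ∈ D(A)}`. -/
def DA2 (f f1 f2 f3 f4 : ℝ → ℂ) : Prop :=
  DA f f1 f2 ∧ DA (leg f1 f2) (legD f1 f2 f3) (legDD f2 f3 f4)

/-- the full sesquilinear form `[f,g]₂(x)` associated with `ℓ²` via Green's formula:
`[f,g]₂ = ((1-x²)²f″)′ ḡ − ((1-x²)²ḡ″)′ f − (1-x²)²f″ḡ′ + (1-x²)²f′ḡ″ − 2(1-x²)f′ḡ + 2(1-x²)fḡ′`. -/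
def bket2 (f f1 f2 f3 g g1 g2 g3 : ℝ → ℂ) (x : ℝ) : ℂ :=
  sqTermD f2 f3 x * star (g x) - star (sqTermD g2 g3 x) * f x
    - (((1 - x^2)^2 : ℝ) : ℂ) * f2 x * star (g1 x)
    + (((1 - x^2)^2 : ℝ) : ℂ) * f1 x * star (g2 x)
    - ((2*(1 - x^2) : ℝ) : ℂ) * f1 x * star (g x)
    + ((2*(1 - x^2) : ℝ) : ℂ) * f x * star (g1 x)

/-- the minimal domain `Δ_{2,min}`: those `f ∈ Δ_{2,max}` with
`[f,g]₂ |_{-1}^{1} = 0` for every `g ∈ Δ_{2,max}` (the two endpoint limits,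
which always exist, agree). -/
def Delta2Min (f f1 f2 f3 f4 : ℝ → ℂ) : Prop :=
  Delta2Max f f1 f2 f3 f4 ∧
  ∀ g g1 g2 g3 g4 : ℝ → ℂ, Delta2Max g g1 g2 g3 g4 →
    ∃ L : ℂ, Tendsto (bket2 f f1 f2 f3 g g1 g2 g3) atOne (nhds L) ∧
      Tendsto (bket2 f f1 f2 f3 g g1 g2 g3) atNegOne (nhds L)
section L2Helpers

lemma finiteIoo : IsFiniteMeasure (volume.restrict (Ioo (-1:ℝ) 1)) := by
  constructor
  rw [Measure.restrict_apply_univ, Real.volume_Ioo]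
  exact ENNReal.ofReal_lt_top

lemma sq_log_le {t : ℝ} (ht : 0 < t) (ht2 : t ≤ 2) :
    (Real.log t)^2 ≤ 16 * t ^ (-(1/2) : ℝ) := by
  rcases le_or_gt 1 t with h1 | h1
  · have hl0 : 0 ≤ Real.log t := Real.log_nonneg h1
    have hl : Real.log t ≤ 1 := by
      calc Real.log t ≤ t - 1 := Real.log_le_sub_one_of_pos ht
        _ ≤ 1 := by linarith
    have h2 : (Real.log t)^2 ≤ 1 := by nlinarith
    have h3 : (2:ℝ) ^ (-(1/2):ℝ) ≤ t ^ (-(1/2):ℝ) := by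
      apply Real.rpow_le_rpow_of_nonpos ht ht2 (by norm_num)
    have h4 : (1/2 : ℝ) ≤ (2:ℝ) ^ (-(1/2):ℝ) := by
      rw [Real.rpow_neg (by norm_num)]
      have : (2:ℝ) ^ ((1/2:ℝ)) ≤ 2 := by
        calc (2:ℝ) ^ ((1/2:ℝ)) ≤ 2 ^ (1:ℝ) := by
              apply (Real.rpow_le_rpow_left_iff (x := (2:ℝ)) (by norm_num)).mpr; norm_num
          _ = 2 := by norm_num
      have hpos2 : (0:ℝ) < (2:ℝ) ^ ((1/2:ℝ)) := by positivity
      have h8 : ((2:ℝ))⁻¹ ≤ ((2:ℝ) ^ ((1/2:ℝ)))⁻¹ := inv_anti₀ hpos2 this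
      have h9 : ((1:ℝ)/2) = ((2:ℝ))⁻¹ := by norm_num
      linarith
    nlinarith
  · -- 0 < t < 1
    have hu : 1 < t⁻¹ := by rw [one_lt_inv_iff₀]; exact ⟨ht, h1⟩  -- may need adjusting
    have hlog : Real.log t = - Real.log t⁻¹ := by rw [Real.log_inv]; ring
    have hpos : 0 < t⁻¹ := by positivity
    have key : Real.log t⁻¹ ≤ 4 * (t⁻¹) ^ ((1/4):ℝ) := by
      have h5 : Real.log ((t⁻¹) ^ ((1/4):ℝ)) ≤ (t⁻¹) ^ ((1/4):ℝ) - 1 :=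
        Real.log_le_sub_one_of_pos (by positivity)
      rw [Real.log_rpow hpos] at h5
      nlinarith [Real.rpow_nonneg hpos.le ((1/4):ℝ)]
    have hnn : 0 ≤ Real.log t⁻¹ := Real.log_nonneg hu.le
    have h6 : (Real.log t⁻¹)^2 ≤ 16 * ((t⁻¹) ^ ((1/4):ℝ))^2 := by nlinarith
    have h7 : ((t⁻¹) ^ ((1/4):ℝ))^2 = t ^ (-(1/2):ℝ) := by
      rw [← Real.rpow_natCast ((t⁻¹) ^ ((1/4):ℝ)) 2, ← Real.rpow_mul hpos.le,
        ← Real.rpow_neg_one t, ← Real.rpow_mul ht.le]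
      norm_num
    rw [hlog]
    rw [h7] at h6
    nlinarith
end L2Helpers
section L2Helpers2

lemma integrableOn_rpow_one_sub :
    IntegrableOn (fun x : ℝ => 16 * (1 - x) ^ (-(1/2) : ℝ)) (Ioo (-1:ℝ) 1) volume := by
  have h0 : IntervalIntegrable (fun t : ℝ => t ^ (-(1/2):ℝ)) volume 0 2 :=
    intervalIntegral.intervalIntegrable_rpow' (by norm_num)
  have h1 : IntervalIntegrable (fun x : ℝ => (1 - x) ^ (-(1/2):ℝ)) volume (-1) 1 := by
    have := h0.comp_sub_left 1
    norm_num at this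
    exact this.symm
  have h2 : IntegrableOn (fun x : ℝ => (1 - x) ^ (-(1/2):ℝ)) (Ioc (-1:ℝ) 1) volume := by
    rw [← intervalIntegrable_iff_integrableOn_Ioc_of_le (by norm_num)]
    exact h1
  exact ((h2.mono_set Ioo_subset_Ioc_self).const_mul 16)

lemma integrableOn_rpow_one_add :
    IntegrableOn (fun x : ℝ => 16 * (1 + x) ^ (-(1/2) : ℝ)) (Ioo (-1:ℝ) 1) volume := by
  have h0 : IntervalIntegrable (fun t : ℝ => t ^ (-(1/2):ℝ)) volume 0 2 :=
    intervalIntegral.intervalIntegrable_rpow' (by norm_num)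
  have h1 : IntervalIntegrable (fun x : ℝ => (1 + x) ^ (-(1/2):ℝ)) volume (-1) 1 := by
    have := (h0.comp_sub_left 1).comp_sub_left 0
    norm_num at this
    exact this
  have h2 : IntegrableOn (fun x : ℝ => (1 + x) ^ (-(1/2):ℝ)) (Ioc (-1:ℝ) 1) volume := by
    rw [← intervalIntegrable_iff_integrableOn_Ioc_of_le (by norm_num)]
    exact h1
  exact ((h2.mono_set Ioo_subset_Ioc_self).const_mul 16)

lemma contOn_log_one_sub : ContinuousOn (fun x : ℝ => Real.log (1 - x)) (Ioo (-1:ℝ) 1) := by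
  intro x hx
  have : ContinuousAt (fun x : ℝ => Real.log (1 - x)) x := by
    have h1 : ContinuousAt (fun x : ℝ => 1 - x) x := by fun_prop
    exact (Real.continuousAt_log (by nlinarith [hx.2] : (1:ℝ) - x ≠ 0)).comp h1
  exact this.continuousWithinAt

lemma contOn_log_one_add : ContinuousOn (fun x : ℝ => Real.log (1 + x)) (Ioo (-1:ℝ) 1) := by
  intro x hx
  have : ContinuousAt (fun x : ℝ => Real.log (1 + x)) x := by
    have h1 : ContinuousAt (fun x : ℝ => 1 + x) x := by fun_prop
    exact (Real.continuousAt_log (by nlinarith [hx.1] : (1:ℝ) + x ≠ 0)).comp h1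
  exact this.continuousWithinAt

lemma memL2_log_one_sub : L2I (fun x : ℝ => ((Real.log (1 - x) : ℝ) : ℂ)) := by
  have hmeas : AEStronglyMeasurable (fun x : ℝ => ((Real.log (1 - x) : ℝ) : ℂ))
      (volume.restrict (Ioo (-1:ℝ) 1)) :=
    ((Complex.continuous_ofReal.comp_continuousOn contOn_log_one_sub)).aestronglyMeasurable
      measurableSet_Ioo
  rw [L2I, memLp_two_iff_integrable_sq_norm hmeas]
  apply Integrable.mono (integrableOn_rpow_one_sub) (((Complex.continuous_ofReal.comp_continuousOn contOn_log_one_sub).norm.pow 2).aestronglyMeasurable measurableSet_Ioo)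
  · rw [ae_restrict_iff' measurableSet_Ioo]
    filter_upwards with x hx
    have h1 : (0:ℝ) < 1 - x := by linarith [hx.2]
    have h2 : (1:ℝ) - x ≤ 2 := by linarith [hx.1]
    have := sq_log_le h1 h2
    simp only [Real.norm_eq_abs, Complex.norm_real, Function.comp_apply, Pi.pow_apply]
    rw [abs_of_nonneg (by positivity : (0:ℝ) ≤ 16 * (1-x) ^ (-(1/2):ℝ)),
      abs_of_nonneg (by positivity : (0:ℝ) ≤ |Real.log (1-x)|^2), sq_abs]
    exact this

lemma memL2_log_one_add : L2I (fun x : ℝ => ((Real.log (1 + x) : ℝ) : ℂ)) := by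
  have hmeas : AEStronglyMeasurable (fun x : ℝ => ((Real.log (1 + x) : ℝ) : ℂ))
      (volume.restrict (Ioo (-1:ℝ) 1)) :=
    ((Complex.continuous_ofReal.comp_continuousOn contOn_log_one_add)).aestronglyMeasurable
      measurableSet_Ioo
  rw [L2I, memLp_two_iff_integrable_sq_norm hmeas]
  apply Integrable.mono (integrableOn_rpow_one_add) (((Complex.continuous_ofReal.comp_continuousOn contOn_log_one_add).norm.pow 2).aestronglyMeasurable measurableSet_Ioo)
  · rw [ae_restrict_iff' measurableSet_Ioo]
    filter_upwards with x hx
    have h1 : (0:ℝ) < 1 + x := by linarith [hx.1]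
    have h2 : (1:ℝ) + x ≤ 2 := by linarith [hx.2]
    have := sq_log_le h1 h2
    simp only [Real.norm_eq_abs, Complex.norm_real, Function.comp_apply, Pi.pow_apply]
    rw [abs_of_nonneg (by positivity : (0:ℝ) ≤ 16 * (1+x) ^ (-(1/2):ℝ)),
      abs_of_nonneg (by positivity : (0:ℝ) ≤ |Real.log (1+x)|^2), sq_abs]
    exact this

lemma L2I_of_bdd {g : ℝ → ℂ} (hg : ContinuousOn g (Ioo (-1:ℝ) 1)) (C : ℝ)
    (hb : ∀ x ∈ Ioo (-1:ℝ) 1, ‖g x‖ ≤ C) : L2I g := by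
  haveI := finiteIoo
  apply MemLp.of_bound (hg.aestronglyMeasurable measurableSet_Ioo) C
  rw [ae_restrict_iff' measurableSet_Ioo]
  filter_upwards with x hx
  exact hb x hx

lemma L2I.bdd_mul {c g : ℝ → ℂ} (hg : L2I g) (hcm : ContinuousOn c (Ioo (-1:ℝ) 1)) (C : ℝ)
    (hb : ∀ x ∈ Ioo (-1:ℝ) 1, ‖c x‖ ≤ C) : L2I (fun x => c x * g x) := by
  have hc : MemLp c ⊤ (volume.restrict (Ioo (-1:ℝ) 1)) := by
    apply memLp_top_of_bound (hcm.aestronglyMeasurable measurableSet_Ioo) C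
    rw [ae_restrict_iff' measurableSet_Ioo]
    filter_upwards with x hx
    exact hb x hx
  have := MemLp.smul (r := 2) hg hc
  exact this

end L2Helpers2
section Helpers

lemma Ioo_sub : ∀ {x y : ℝ}, x ∈ Ioo (-1:ℝ) 1 → y ∈ Ioo (-1:ℝ) 1 → Set.uIcc x y ⊆ Ioo (-1:ℝ) 1 :=
  fun hx hy => Set.OrdConnected.uIcc_subset Set.ordConnected_Ioo hx hy

lemma locACOn_of_hasDerivAt {g g' : ℝ → ℂ}
    (hd : ∀ x ∈ Ioo (-1:ℝ) 1, HasDerivAt g (g' x) x)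
    (hc : ContinuousOn g' (Ioo (-1:ℝ) 1)) : LocACOn g g' := by
  intro x hx y hy
  have hsub := Ioo_sub hx hy
  have hint : IntervalIntegrable g' volume x y := (hc.mono hsub).intervalIntegrable
  exact ⟨hint, (intervalIntegral.integral_eq_sub_of_hasDerivAt
    (fun t ht => hd t (hsub ht)) hint).symm⟩

lemma LocACOn.continuousOn {g g' : ℝ → ℂ} (h : LocACOn g g') :
    ContinuousOn g (Ioo (-1:ℝ) 1) := by
  intro c hc
  obtain ⟨a, ha, hac⟩ := exists_between hc.1
  obtain ⟨b, hcb, hb⟩ := exists_between hc.2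
  have haI : a ∈ Ioo (-1:ℝ) 1 := ⟨ha, hac.trans hc.2⟩
  have hbI : b ∈ Ioo (-1:ℝ) 1 := ⟨hc.1.trans hcb, hb⟩
  have hab : a ≤ b := (hac.trans hcb).le
  have hsub : Set.uIcc a b ⊆ Ioo (-1:ℝ) 1 := Ioo_sub haI hbI
  have hint : IntervalIntegrable g' volume a b := (h a haI b hbI).1
  have hcont : ContinuousOn (fun y => ∫ t in a..y, g' t) (Set.uIcc a b) :=
    intervalIntegral.continuousOn_primitive_interval' hint Set.left_mem_uIcc
  have heq : ∀ y ∈ Set.uIcc a b, g y = g a + ∫ t in a..y, g' t := by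
    intro y hy
    have h2 := (h a haI y (hsub hy)).2
    linear_combination h2
  have h3 : ContinuousOn g (Set.uIcc a b) :=
    (continuousOn_const.add hcont).congr heq
  have hmem : Set.uIcc a b ∈ nhds c := by
    rw [Set.uIcc_of_le hab]
    exact Icc_mem_nhds hac hcb
  exact (h3.continuousAt hmem).continuousWithinAt

lemma locACOn_deriv_affine {f f' : ℝ → ℂ} (h : LocACOn f f')
    (hc : ContinuousOn f' (Ioo (-1:ℝ) 1)) {a b : ℝ}
    (hab : Ioo a b ⊆ Ioo (-1:ℝ) 1) (c₀ c₁ : ℂ)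
    (hf : ∀ x ∈ Ioo a b, f x = c₀ + c₁ * (x:ℂ)) :
    ∀ x ∈ Ioo a b, f' x = c₁ := by
  intro c hcmem
  have hcIoo : c ∈ Ioo (-1:ℝ) 1 := hab hcmem
  have hca : ContinuousAt f' c := hc.continuousAt (isOpen_Ioo.mem_nhds hcIoo)
  have hG : HasDerivAt (fun u => ∫ t in c..u, f' t) (f' c) c :=
    intervalIntegral.integral_hasDerivAt_right ((h c hcIoo c hcIoo).1)
      (hc.stronglyMeasurableAtFilter isOpen_Ioo c hcIoo) hca
  have hev : (fun u : ℝ => c₁ * (u:ℂ) - c₁ * (c:ℂ)) =ᶠ[nhds c]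
      (fun u => ∫ t in c..u, f' t) := by
    filter_upwards [isOpen_Ioo.mem_nhds hcmem] with u hu
    have h1 := (h c hcIoo u (hab hu)).2
    rw [hf u hu, hf c hcmem] at h1
    rw [← h1]; ring
  have hlin : HasDerivAt (fun u : ℝ => c₁ * (u:ℂ) - c₁ * (c:ℂ)) c₁ c := by
    have hid : HasDerivAt (fun u : ℝ => ((u:ℝ):ℂ)) 1 c := by
      simpa using (hasDerivAt_id c).ofReal_comp
    simpa using (hid.const_mul c₁).sub_const (c₁ * (c:ℂ))
  have hG2 : HasDerivAt (fun u => ∫ t in c..u, f' t) c₁ c := hlin.congr_of_eventuallyEq hev.symm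
  exact (hG.unique hG2)

end Helpers
section TestFunctions

noncomputable def ur (x : ℝ) : ℝ := (1 - x)⁻¹
noncomputable def vr (x : ℝ) : ℝ := (1 + x)⁻¹

lemma hasDerivAt_ur {x : ℝ} (h : (1:ℝ) - x ≠ 0) :
    HasDerivAt ur ((ur x)^2) x := by
  have h1 : HasDerivAt (fun x : ℝ => 1 - x) (-1) x := by
    simpa using (hasDerivAt_id x).const_sub (1:ℝ)
  have := (hasDerivAt_inv h).comp x h1
  refine this.congr_deriv ?_
  rw [ur, inv_pow]; ring

lemma hasDerivAt_vr {x : ℝ} (h : (1:ℝ) + x ≠ 0) :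
    HasDerivAt vr (-(vr x)^2) x := by
  have h1 : HasDerivAt (fun x : ℝ => 1 + x) 1 x := by
    simpa using (hasDerivAt_id x).const_add (1:ℝ)
  have := (hasDerivAt_inv h).comp x h1
  refine this.congr_deriv ?_
  rw [vr, inv_pow]; ring

lemma hasDerivAt_logs {x : ℝ} (h : (1:ℝ) - x ≠ 0) :
    HasDerivAt (fun x : ℝ => Real.log (1 - x)) (-(ur x)) x := by
  have h1 : HasDerivAt (fun x : ℝ => 1 - x) (-1) x := by
    simpa using (hasDerivAt_id x).const_sub (1:ℝ)
  have := (Real.hasDerivAt_log h).comp x h1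
  refine this.congr_deriv ?_
  rw [ur]; ring

lemma hasDerivAt_loga {x : ℝ} (h : (1:ℝ) + x ≠ 0) :
    HasDerivAt (fun x : ℝ => Real.log (1 + x)) (vr x) x := by
  have h1 : HasDerivAt (fun x : ℝ => 1 + x) 1 x := by
    simpa using (hasDerivAt_id x).const_add (1:ℝ)
  have := (Real.hasDerivAt_log h).comp x h1
  refine this.congr_deriv ?_
  rw [vr]; ring

noncomputable def gA : ℝ → ℂ := fun x => ((Real.log (1 - x) : ℝ) : ℂ)
noncomputable def gA1 : ℝ → ℂ := fun x => ((-(ur x) : ℝ) : ℂ)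
noncomputable def gA2 : ℝ → ℂ := fun x => ((-(ur x)^2 : ℝ) : ℂ)
noncomputable def gA3 : ℝ → ℂ := fun x => ((-2*(ur x)^3 : ℝ) : ℂ)
noncomputable def gA4 : ℝ → ℂ := fun x => ((-6*(ur x)^4 : ℝ) : ℂ)
noncomputable def gB : ℝ → ℂ := fun x => (((1-x) * Real.log (1 - x) : ℝ) : ℂ)
noncomputable def gB1 : ℝ → ℂ := fun x => ((-Real.log (1 - x) - 1 : ℝ) : ℂ)
noncomputable def gB2 : ℝ → ℂ := fun x => ((ur x : ℝ) : ℂ)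
noncomputable def gB3 : ℝ → ℂ := fun x => (((ur x)^2 : ℝ) : ℂ)
noncomputable def gB4 : ℝ → ℂ := fun x => ((2*(ur x)^3 : ℝ) : ℂ)
noncomputable def gC : ℝ → ℂ := fun x => ((Real.log (1 + x) : ℝ) : ℂ)
noncomputable def gC1 : ℝ → ℂ := fun x => ((vr x : ℝ) : ℂ)
noncomputable def gC2 : ℝ → ℂ := fun x => ((-(vr x)^2 : ℝ) : ℂ)
noncomputable def gC3 : ℝ → ℂ := fun x => ((2*(vr x)^3 : ℝ) : ℂ)
noncomputable def gC4 : ℝ → ℂ := fun x => ((-6*(vr x)^4 : ℝ) : ℂ)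
noncomputable def gD : ℝ → ℂ := fun x => (((1+x) * Real.log (1 + x) : ℝ) : ℂ)
noncomputable def gD1 : ℝ → ℂ := fun x => ((Real.log (1 + x) + 1 : ℝ) : ℂ)
noncomputable def gD2 : ℝ → ℂ := fun x => ((vr x : ℝ) : ℂ)
noncomputable def gD3 : ℝ → ℂ := fun x => ((-(vr x)^2 : ℝ) : ℂ)
noncomputable def gD4 : ℝ → ℂ := fun x => ((2*(vr x)^3 : ℝ) : ℂ)

lemma hs_ne {x : ℝ} (hx : x ∈ Ioo (-1:ℝ) 1) : (1:ℝ) - x ≠ 0 := by nlinarith [hx.2]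
lemma ha_ne {x : ℝ} (hx : x ∈ Ioo (-1:ℝ) 1) : (1:ℝ) + x ≠ 0 := by nlinarith [hx.1]

lemma cont_ur : ContinuousOn ur (Ioo (-1:ℝ) 1) :=
  ((continuous_const.sub continuous_id).continuousOn).inv₀ (fun x hx => hs_ne hx)
lemma cont_vr : ContinuousOn vr (Ioo (-1:ℝ) 1) :=
  ((continuous_const.add continuous_id).continuousOn).inv₀ (fun x hx => ha_ne hx)

lemma contC {f : ℝ → ℝ} (hf : ContinuousOn f (Ioo (-1:ℝ) 1)) :
    ContinuousOn (fun x => ((f x : ℝ) : ℂ)) (Ioo (-1:ℝ) 1) :=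
  Complex.continuous_ofReal.comp_continuousOn hf

lemma locA1 : LocACOn gA gA1 := by
  apply locACOn_of_hasDerivAt
  · intro x hx
    exact (hasDerivAt_logs (hs_ne hx)).ofReal_comp
  · exact contC cont_ur.neg
lemma locA2 : LocACOn gA1 gA2 := by
  apply locACOn_of_hasDerivAt
  · intro x hx
    exact ((hasDerivAt_ur (hs_ne hx)).neg).ofReal_comp
  · exact contC (cont_ur.pow 2).neg
lemma locA3 : LocACOn gA2 gA3 := by
  apply locACOn_of_hasDerivAt
  · intro x hx
    have h : HasDerivAt (fun x => -(ur x)^2) (-2*(ur x)^3) x := by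
      have := ((hasDerivAt_ur (hs_ne hx)).pow 2).neg
      refine this.congr_deriv ?_
      push_cast; ring
    exact h.ofReal_comp
  · exact contC (continuousOn_const.mul (cont_ur.pow 3))
lemma locA4 : LocACOn gA3 gA4 := by
  apply locACOn_of_hasDerivAt
  · intro x hx
    have h : HasDerivAt (fun x => -2*(ur x)^3) (-6*(ur x)^4) x := by
      have := ((hasDerivAt_ur (hs_ne hx)).pow 3).const_mul (-2:ℝ)
      refine this.congr_deriv ?_
      push_cast; ring
    exact h.ofReal_comp
  · exact contC (continuousOn_const.mul (cont_ur.pow 4))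

end TestFunctions
section LocBCD

lemma locB1 : LocACOn gB gB1 := by
  apply locACOn_of_hasDerivAt
  · intro x hx
    have h : HasDerivAt (fun x => (1-x) * Real.log (1-x)) (-Real.log (1-x) - 1) x := by
      have h1 : HasDerivAt (fun x : ℝ => 1 - x) (-1) x := by
        simpa using (hasDerivAt_id x).const_sub (1:ℝ)
      have := h1.mul (hasDerivAt_logs (hs_ne hx))
      refine this.congr_deriv ?_
      rw [ur]
      field_simp [hs_ne hx]
      ring
    exact h.ofReal_comp
  · exact contC (contOn_log_one_sub.neg.sub continuousOn_const)
lemma locB2 : LocACOn gB1 gB2 := by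
  apply locACOn_of_hasDerivAt
  · intro x hx
    have h : HasDerivAt (fun x => -Real.log (1-x) - 1) (ur x) x := by
      have := ((hasDerivAt_logs (hs_ne hx)).neg).sub_const 1
      refine this.congr_deriv ?_; ring
    exact h.ofReal_comp
  · exact contC cont_ur
lemma locB3 : LocACOn gB2 gB3 := by
  apply locACOn_of_hasDerivAt
  · intro x hx
    exact (hasDerivAt_ur (hs_ne hx)).ofReal_comp
  · exact contC (cont_ur.pow 2)
lemma locB4 : LocACOn gB3 gB4 := by
  apply locACOn_of_hasDerivAt
  · intro x hx
    have h : HasDerivAt (fun x => (ur x)^2) (2*(ur x)^3) x := by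
      have := (hasDerivAt_ur (hs_ne hx)).pow 2
      refine this.congr_deriv ?_; push_cast; ring
    exact h.ofReal_comp
  · exact contC (continuousOn_const.mul (cont_ur.pow 3))

lemma locC1 : LocACOn gC gC1 := by
  apply locACOn_of_hasDerivAt
  · intro x hx
    exact (hasDerivAt_loga (ha_ne hx)).ofReal_comp
  · exact contC cont_vr
lemma locC2 : LocACOn gC1 gC2 := by
  apply locACOn_of_hasDerivAt
  · intro x hx
    exact (hasDerivAt_vr (ha_ne hx)).ofReal_comp
  · exact contC (cont_vr.pow 2).neg
lemma locC3 : LocACOn gC2 gC3 := by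
  apply locACOn_of_hasDerivAt
  · intro x hx
    have h : HasDerivAt (fun x => -(vr x)^2) (2*(vr x)^3) x := by
      have := ((hasDerivAt_vr (ha_ne hx)).pow 2).neg
      refine this.congr_deriv ?_; push_cast; ring
    exact h.ofReal_comp
  · exact contC (continuousOn_const.mul (cont_vr.pow 3))
lemma locC4 : LocACOn gC3 gC4 := by
  apply locACOn_of_hasDerivAt
  · intro x hx
    have h : HasDerivAt (fun x => 2*(vr x)^3) (-6*(vr x)^4) x := by
      have := ((hasDerivAt_vr (ha_ne hx)).pow 3).const_mul (2:ℝ)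
      refine this.congr_deriv ?_; push_cast; ring
    exact h.ofReal_comp
  · exact contC (continuousOn_const.mul (cont_vr.pow 4))

lemma locD1 : LocACOn gD gD1 := by
  apply locACOn_of_hasDerivAt
  · intro x hx
    have h : HasDerivAt (fun x => (1+x) * Real.log (1+x)) (Real.log (1+x) + 1) x := by
      have h1 : HasDerivAt (fun x : ℝ => 1 + x) 1 x := by
        simpa using (hasDerivAt_id x).const_add (1:ℝ)
      have := h1.mul (hasDerivAt_loga (ha_ne hx))
      refine this.congr_deriv ?_
      rw [vr]
      field_simp [ha_ne hx]
    exact h.ofReal_comp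
  · exact contC (contOn_log_one_add.add continuousOn_const)
lemma locD2 : LocACOn gD1 gD2 := by
  apply locACOn_of_hasDerivAt
  · intro x hx
    exact ((hasDerivAt_loga (ha_ne hx)).add_const 1).ofReal_comp
  · exact contC cont_vr
lemma locD3 : LocACOn gD2 gD3 := by
  apply locACOn_of_hasDerivAt
  · intro x hx
    exact (hasDerivAt_vr (ha_ne hx)).ofReal_comp
  · exact contC (cont_vr.pow 2).neg
lemma locD4 : LocACOn gD3 gD4 := by
  apply locACOn_of_hasDerivAt
  · intro x hx
    have h : HasDerivAt (fun x => -(vr x)^2) (2*(vr x)^3) x := by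
      have := ((hasDerivAt_vr (ha_ne hx)).pow 2).neg
      refine this.congr_deriv ?_; push_cast; ring
    exact h.ofReal_comp
  · exact contC (continuousOn_const.mul (cont_vr.pow 3))

end LocBCD
section LegSqId

lemma castne_s {x : ℝ} (hx : x ∈ Ioo (-1:ℝ) 1) : ((1:ℂ) - (x:ℂ)) ≠ 0 := by
  have h := hs_ne hx
  have h2 : (((1 - x : ℝ)):ℂ) ≠ 0 := Complex.ofReal_ne_zero.mpr h
  push_cast at h2
  exact h2

lemma castne_a {x : ℝ} (hx : x ∈ Ioo (-1:ℝ) 1) : ((1:ℂ) + (x:ℂ)) ≠ 0 := by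
  have h := ha_ne hx
  have h2 : (((1 + x : ℝ)):ℂ) ≠ 0 := Complex.ofReal_ne_zero.mpr h
  push_cast at h2
  exact h2

lemma legSq_gA_eq {x : ℝ} (hx : x ∈ Ioo (-1:ℝ) 1) : legSq gA1 gA2 gA3 gA4 x = 0 := by
  have hC := castne_s hx
  simp only [legSq, gA1, gA2, gA3, gA4, ur]
  push_cast
  field_simp
  ring

lemma legSq_gC_eq {x : ℝ} (hx : x ∈ Ioo (-1:ℝ) 1) : legSq gC1 gC2 gC3 gC4 x = 0 := by
  have hC := castne_a hx
  simp only [legSq, gC1, gC2, gC3, gC4, vr]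
  push_cast
  field_simp
  ring

lemma legSq_gB_eq {x : ℝ} (hx : x ∈ Ioo (-1:ℝ) 1) :
    legSq gB1 gB2 gB3 gB4 x = ((-4-12*x:ℝ):ℂ) + ((-4*x:ℝ):ℂ) * gA x := by
  have hC := castne_s hx
  simp only [legSq, gB1, gB2, gB3, gB4, gA, ur]
  push_cast
  field_simp
  ring

lemma legSq_gD_eq {x : ℝ} (hx : x ∈ Ioo (-1:ℝ) 1) :
    legSq gD1 gD2 gD3 gD4 x = ((-4+12*x:ℝ):ℂ) + ((4*x:ℝ):ℂ) * gC x := by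
  have hC := castne_a hx
  simp only [legSq, gD1, gD2, gD3, gD4, gC, vr]
  push_cast
  field_simp
  ring

end LegSqId

section L2Assemble

lemma L2I_gA : L2I gA := memL2_log_one_sub
lemma L2I_gC : L2I gC := memL2_log_one_add

lemma L2I_legSq_gA : L2I (legSq gA1 gA2 gA3 gA4) := by
  have hae : legSq gA1 gA2 gA3 gA4 =ᵐ[volume.restrict (Ioo (-1:ℝ) 1)] 0 := by
    rw [Filter.EventuallyEq, ae_restrict_iff' measurableSet_Ioo]
    filter_upwards with x hx
    simpa using legSq_gA_eq hx
  exact (memLp_congr_ae hae).mpr MemLp.zero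

lemma L2I_legSq_gC : L2I (legSq gC1 gC2 gC3 gC4) := by
  have hae : legSq gC1 gC2 gC3 gC4 =ᵐ[volume.restrict (Ioo (-1:ℝ) 1)] 0 := by
    rw [Filter.EventuallyEq, ae_restrict_iff' measurableSet_Ioo]
    filter_upwards with x hx
    simpa using legSq_gC_eq hx
  exact (memLp_congr_ae hae).mpr MemLp.zero

lemma norm_ofReal_le {r C : ℝ} (h : |r| ≤ C) : ‖((r:ℝ):ℂ)‖ ≤ C := by
  rw [Complex.norm_real, Real.norm_eq_abs]; exact h

lemma L2I_gB : L2I gB := by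
  have h2 : L2I (fun x => ((1-x:ℝ):ℂ) * gA x) := by
    apply L2I_gA.bdd_mul (contC ((continuous_const.sub continuous_id).continuousOn)) 2
    intro x hx
    apply norm_ofReal_le
    simp only [Pi.sub_apply, id_eq]
    rw [abs_le]; constructor <;> nlinarith [hx.1, hx.2]
  have h : gB = fun x => ((1-x:ℝ):ℂ) * gA x := by
    funext x; simp only [gB, gA]; push_cast; ring
  rw [L2I, h]; exact h2

lemma L2I_gD : L2I gD := by
  have h2 : L2I (fun x => ((1+x:ℝ):ℂ) * gC x) := by
    apply L2I_gC.bdd_mul (contC ((continuous_const.add continuous_id).continuousOn)) 2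
    intro x hx
    apply norm_ofReal_le
    simp only [Pi.add_apply, id_eq]
    rw [abs_le]; constructor <;> nlinarith [hx.1, hx.2]
  have h : gD = fun x => ((1+x:ℝ):ℂ) * gC x := by
    funext x; simp only [gD, gC]; push_cast; ring
  rw [L2I, h]; exact h2

lemma L2I_legSq_gB : L2I (legSq gB1 gB2 gB3 gB4) := by
  have h1 : L2I (fun x : ℝ => ((-4-12*x:ℝ):ℂ)) := by
    apply L2I_of_bdd (contC (by fun_prop)) 16
    intro x hx
    apply norm_ofReal_le
    rw [abs_le]; constructor <;> nlinarith [hx.1, hx.2]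
  have h2 : L2I (fun x => ((-4*x:ℝ):ℂ) * gA x) := by
    apply L2I_gA.bdd_mul (contC (by fun_prop)) 4
    intro x hx
    apply norm_ofReal_le
    rw [abs_le]; constructor <;> nlinarith [hx.1, hx.2]
  have hae : legSq gB1 gB2 gB3 gB4 =ᵐ[volume.restrict (Ioo (-1:ℝ) 1)]
      (fun x => ((-4-12*x:ℝ):ℂ) + ((-4*x:ℝ):ℂ) * gA x) := by
    rw [Filter.EventuallyEq, ae_restrict_iff' measurableSet_Ioo]
    filter_upwards with x hx
    exact legSq_gB_eq hx
  exact (memLp_congr_ae hae).mpr (h1.add h2)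

lemma L2I_legSq_gD : L2I (legSq gD1 gD2 gD3 gD4) := by
  have h1 : L2I (fun x : ℝ => ((-4+12*x:ℝ):ℂ)) := by
    apply L2I_of_bdd (contC (by fun_prop)) 16
    intro x hx
    apply norm_ofReal_le
    rw [abs_le]; constructor <;> nlinarith [hx.1, hx.2]
  have h2 : L2I (fun x => ((4*x:ℝ):ℂ) * gC x) := by
    apply L2I_gC.bdd_mul (contC (by fun_prop)) 4
    intro x hx
    apply norm_ofReal_le
    rw [abs_le]; constructor <;> nlinarith [hx.1, hx.2]
  have hae : legSq gD1 gD2 gD3 gD4 =ᵐ[volume.restrict (Ioo (-1:ℝ) 1)]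
      (fun x => ((-4+12*x:ℝ):ℂ) + ((4*x:ℝ):ℂ) * gC x) := by
    rw [Filter.EventuallyEq, ae_restrict_iff' measurableSet_Ioo]
    filter_upwards with x hx
    exact legSq_gD_eq hx
  exact (memLp_congr_ae hae).mpr (h1.add h2)

lemma D2M_gA : Delta2Max gA gA1 gA2 gA3 gA4 := ⟨locA1, locA2, locA3, locA4, L2I_gA, L2I_legSq_gA⟩
lemma D2M_gB : Delta2Max gB gB1 gB2 gB3 gB4 := ⟨locB1, locB2, locB3, locB4, L2I_gB, L2I_legSq_gB⟩
lemma D2M_gC : Delta2Max gC gC1 gC2 gC3 gC4 := ⟨locC1, locC2, locC3, locC4, L2I_gC, L2I_legSq_gC⟩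
lemma D2M_gD : Delta2Max gD gD1 gD2 gD3 gD4 := ⟨locD1, locD2, locD3, locD4, L2I_gD, L2I_legSq_gD⟩

end L2Assemble
section Limits

lemma atOne_neBot : (atOne).NeBot := by
  unfold atOne; exact right_nhdsWithin_Ioo_neBot (by norm_num)
lemma atNegOne_neBot : (atNegOne).NeBot := by
  unfold atNegOne; exact left_nhdsWithin_Ioo_neBot (by norm_num)

lemma atOne_le : atOne ≤ nhds 1 := by unfold atOne; exact nhdsWithin_le_nhds
lemma atNegOne_le : atNegOne ≤ nhds (-1) := by unfold atNegOne; exact nhdsWithin_le_nhds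

lemma tendsto_ofReal_atOne {f : ℝ → ℝ} (hf : ContinuousAt f 1) :
    Tendsto (fun x => ((f x : ℝ):ℂ)) atOne (nhds ((f 1 : ℝ):ℂ)) :=
  (Complex.continuous_ofReal.continuousAt.tendsto).comp (hf.tendsto.mono_left atOne_le)

lemma tendsto_ofReal_atNegOne {f : ℝ → ℝ} (hf : ContinuousAt f (-1)) :
    Tendsto (fun x => ((f x : ℝ):ℂ)) atNegOne (nhds ((f (-1) : ℝ):ℂ)) :=
  (Complex.continuous_ofReal.continuousAt.tendsto).comp (hf.tendsto.mono_left atNegOne_le)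

lemma tendsto_logterm_atOne :
    Tendsto (fun x => ((Real.log (1-x) * (1-x) : ℝ):ℂ)) atOne (nhds 0) := by
  have h0 : Tendsto (fun t : ℝ => Real.log t * t) (nhdsWithin 0 (Ioi 0)) (nhds 0) := by
    have := tendsto_log_mul_rpow_nhdsGT_zero one_pos
    simpa [Real.rpow_one] using this
  have h1 : Tendsto (fun x : ℝ => 1 - x) atOne (nhdsWithin 0 (Ioi 0)) := by
    rw [tendsto_nhdsWithin_iff]
    constructor
    · have h2 : Tendsto (fun x : ℝ => 1 - x) (nhds 1) (nhds 0) := by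
        have hc : Continuous (fun x : ℝ => 1 - x) := by fun_prop
        have := hc.tendsto (1:ℝ)
        simpa using this
      exact h2.mono_left atOne_le
    · unfold atOne
      filter_upwards [self_mem_nhdsWithin] with x hx
      simp only [Set.mem_Ioi]
      linarith [hx.2]
  have h2 : Tendsto (fun x : ℝ => Real.log (1-x) * (1-x)) atOne (nhds 0) := h0.comp h1
  have h3 := (Complex.continuous_ofReal.continuousAt (x := (0:ℝ))).tendsto.comp h2
  simpa only [Function.comp_def, Complex.ofReal_zero] using h3

lemma tendsto_logterm_atNegOne :
    Tendsto (fun x => ((Real.log (1+x) * (1+x) : ℝ):ℂ)) atNegOne (nhds 0) := by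
  have h0 : Tendsto (fun t : ℝ => Real.log t * t) (nhdsWithin 0 (Ioi 0)) (nhds 0) := by
    have := tendsto_log_mul_rpow_nhdsGT_zero one_pos
    simpa [Real.rpow_one] using this
  have h1 : Tendsto (fun x : ℝ => 1 + x) atNegOne (nhdsWithin 0 (Ioi 0)) := by
    rw [tendsto_nhdsWithin_iff]
    constructor
    · have h2 : Tendsto (fun x : ℝ => 1 + x) (nhds (-1)) (nhds 0) := by
        have hc : Continuous (fun x : ℝ => 1 + x) := by fun_prop
        have := hc.tendsto (-1:ℝ)
        simpa using this
      exact h2.mono_left atNegOne_le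
    · unfold atNegOne
      filter_upwards [self_mem_nhdsWithin] with x hx
      simp only [Set.mem_Ioi]
      linarith [hx.1]
  have h2 : Tendsto (fun x : ℝ => Real.log (1+x) * (1+x)) atNegOne (nhds 0) := h0.comp h1
  have h3 := (Complex.continuous_ofReal.continuousAt (x := (0:ℝ))).tendsto.comp h2
  simpa only [Function.comp_def, Complex.ofReal_zero] using h3

lemma tendsto_E_atOne (A B : ℂ) (C₁ C₂ D₁ D₂ : ℝ → ℝ) (h1 : ContinuousAt C₁ 1)
    (h2 : ContinuousAt C₂ 1) (h3 : ContinuousAt D₁ 1) (h4 : ContinuousAt D₂ 1) :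
    Tendsto (fun x => A * ((C₁ x:ℝ):ℂ) + B * ((C₂ x:ℝ):ℂ)
      + (A * ((D₁ x:ℝ):ℂ) + B * ((D₂ x:ℝ):ℂ)) * ((Real.log (1-x) * (1-x) : ℝ):ℂ))
      atOne (nhds (A * ((C₁ 1:ℝ):ℂ) + B * ((C₂ 1:ℝ):ℂ))) := by
  have h := (((tendsto_const_nhds (x := A)).mul (tendsto_ofReal_atOne h1)).add
      ((tendsto_const_nhds (x := B)).mul (tendsto_ofReal_atOne h2))).add
    (((((tendsto_const_nhds (x := A)).mul (tendsto_ofReal_atOne h3)).add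
      ((tendsto_const_nhds (x := B)).mul (tendsto_ofReal_atOne h4)))).mul tendsto_logterm_atOne)
  simpa using h

lemma tendsto_E_atNegOne (A B : ℂ) (C₁ C₂ D₁ D₂ : ℝ → ℝ) (h1 : ContinuousAt C₁ (-1))
    (h2 : ContinuousAt C₂ (-1)) (h3 : ContinuousAt D₁ (-1)) (h4 : ContinuousAt D₂ (-1)) :
    Tendsto (fun x => A * ((C₁ x:ℝ):ℂ) + B * ((C₂ x:ℝ):ℂ)
      + (A * ((D₁ x:ℝ):ℂ) + B * ((D₂ x:ℝ):ℂ)) * ((Real.log (1+x) * (1+x) : ℝ):ℂ))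
      atNegOne (nhds (A * ((C₁ (-1):ℝ):ℂ) + B * ((C₂ (-1):ℝ):ℂ))) := by
  have h := (((tendsto_const_nhds (x := A)).mul (tendsto_ofReal_atNegOne h1)).add
      ((tendsto_const_nhds (x := B)).mul (tendsto_ofReal_atNegOne h2))).add
    (((((tendsto_const_nhds (x := A)).mul (tendsto_ofReal_atNegOne h3)).add
      ((tendsto_const_nhds (x := B)).mul (tendsto_ofReal_atNegOne h4)))).mul tendsto_logterm_atNegOne)
  simpa using h

lemma tendsto_E2_atOne (A B : ℂ) (e₁ e₂ : ℝ → ℝ) (h1 : ContinuousAt e₁ 1)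
    (h2 : ContinuousAt e₂ 1) :
    Tendsto (fun x => A * ((e₁ x:ℝ):ℂ) + B * ((e₂ x:ℝ):ℂ)) atOne
      (nhds (A * ((e₁ 1:ℝ):ℂ) + B * ((e₂ 1:ℝ):ℂ))) :=
  ((tendsto_const_nhds (x := A)).mul (tendsto_ofReal_atOne h1)).add
    ((tendsto_const_nhds (x := B)).mul (tendsto_ofReal_atOne h2))

lemma tendsto_E2_atNegOne (A B : ℂ) (e₁ e₂ : ℝ → ℝ) (h1 : ContinuousAt e₁ (-1))
    (h2 : ContinuousAt e₂ (-1)) :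
    Tendsto (fun x => A * ((e₁ x:ℝ):ℂ) + B * ((e₂ x:ℝ):ℂ)) atNegOne
      (nhds (A * ((e₁ (-1):ℝ):ℂ) + B * ((e₂ (-1):ℝ):ℂ))) :=
  ((tendsto_const_nhds (x := A)).mul (tendsto_ofReal_atNegOne h1)).add
    ((tendsto_const_nhds (x := B)).mul (tendsto_ofReal_atNegOne h2))

lemma Ioo_mem_atOne {a : ℝ} (ha : a < 1) : Ioo a 1 ∈ atOne := by
  unfold atOne
  have h : Ioi a ∈ nhds (1:ℝ) := Ioi_mem_nhds ha
  have h2 := inter_mem_nhdsWithin (Ioo (-1:ℝ) 1) h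
  apply mem_of_superset h2
  rintro x ⟨hx1, hx2⟩
  exact ⟨hx2, hx1.2⟩

lemma Ioo_mem_atNegOne {b : ℝ} (hb : -1 < b) : Ioo (-1:ℝ) b ∈ atNegOne := by
  unfold atNegOne
  have h : Iio b ∈ nhds (-1:ℝ) := Iio_mem_nhds hb
  have h2 := inter_mem_nhdsWithin (Ioo (-1:ℝ) 1) h
  apply mem_of_superset h2
  rintro x ⟨hx1, hx2⟩
  exact ⟨hx1.1, hx2⟩

end Limits
section Cases

lemma contAt_log_s : ContinuousAt (fun x : ℝ => Real.log (1 - x)) (-1) := by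
  have h1 : ContinuousAt (fun x : ℝ => 1 - x) (-1) := by fun_prop
  have h2 : ContinuousAt Real.log ((fun x : ℝ => 1 - x) (-1)) := Real.continuousAt_log (by norm_num)
  exact h2.comp h1

lemma contAt_log_a : ContinuousAt (fun x : ℝ => Real.log (1 + x)) 1 := by
  have h1 : ContinuousAt (fun x : ℝ => 1 + x) (1:ℝ) := by fun_prop
  have h2 : ContinuousAt Real.log ((fun x : ℝ => 1 + x) (1:ℝ)) := Real.continuousAt_log (by norm_num)
  exact h2.comp h1

lemma subIoo_one : ∀ {a : ℝ}, 0 ≤ a → Ioo a 1 ⊆ Ioo (-1:ℝ) 1 :=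
  fun ha0 x hx => ⟨by linarith [hx.1], hx.2⟩
lemma subIoo_neg : ∀ {b : ℝ}, b ≤ 0 → Ioo (-1:ℝ) b ⊆ Ioo (-1:ℝ) 1 :=
  fun hb0 x hx => ⟨hx.1, by linarith [hx.2]⟩

lemma bket2_gA_one (A B : ℂ) {f f1 f2 f3 : ℝ → ℂ} {a : ℝ} (ha0 : 0 ≤ a) (ha : a < 1)
    (hF : ∀ x ∈ Ioo a 1, f x = A + B*(x:ℂ)) (hF1 : ∀ x ∈ Ioo a 1, f1 x = B)
    (hF2 : ∀ x ∈ Ioo a 1, f2 x = 0) (hF3 : ∀ x ∈ Ioo a 1, f3 x = 0) :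
    Tendsto (bket2 f f1 f2 f3 gA gA1 gA2 gA3) atOne (nhds (-4*B)) := by
  have hE := tendsto_E_atOne A B (fun _ => (0:ℝ)) (fun x => -(1+x)^2) (fun _ => (0:ℝ))
    (fun x => -2*(1+x)) (by fun_prop) (by fun_prop) (by fun_prop) (by fun_prop)
  have hval : A * (((0:ℝ)):ℂ) + B * ((-(1+(1:ℝ))^2 : ℝ):ℂ) = -4*B := by push_cast; ring
  rw [hval] at hE
  apply hE.congr'
  filter_upwards [Ioo_mem_atOne ha] with x hx
  have hx' := subIoo_one ha0 hx
  have hC := castne_s hx'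
  simp only [bket2, sqTermD, gA, gA1, gA2, gA3, ur, hF x hx, hF1 x hx, hF2 x hx, hF3 x hx,
    Complex.star_def, map_sub, map_mul, Complex.conj_ofReal]
  push_cast
  field_simp [hC]
  ring

lemma bket2_gB_one (A B : ℂ) {f f1 f2 f3 : ℝ → ℂ} {a : ℝ} (ha0 : 0 ≤ a) (ha : a < 1)
    (hF : ∀ x ∈ Ioo a 1, f x = A + B*(x:ℂ)) (hF1 : ∀ x ∈ Ioo a 1, f1 x = B)
    (hF2 : ∀ x ∈ Ioo a 1, f2 x = 0) (hF3 : ∀ x ∈ Ioo a 1, f3 x = 0) :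
    Tendsto (bket2 f f1 f2 f3 gB gB1 gB2 gB3) atOne (nhds (4*A + 4*B)) := by
  have hE := tendsto_E_atOne A B (fun x => -(1+x)*(1-3*x) - 2*(1-x^2))
    (fun x => -x*(1+x)*(1-3*x) + (1+x)^2*(1-x) - 2*x*(1-x^2))
    (fun x => -2*(1+x)) (fun x => -2*(1+x)*(1-x) - 2*x*(1+x))
    (by fun_prop) (by fun_prop) (by fun_prop) (by fun_prop)
  have hval : A * ((( -(1+(1:ℝ))*(1-3*1) - 2*(1-(1:ℝ)^2) :ℝ)):ℂ)
      + B * (((-1*(1+(1:ℝ))*(1-3*1) + (1+(1:ℝ))^2*(1-1) - 2*1*(1-(1:ℝ)^2) :ℝ)):ℂ)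
      = 4*A + 4*B := by push_cast; ring
  rw [hval] at hE
  apply hE.congr'
  filter_upwards [Ioo_mem_atOne ha] with x hx
  have hx' := subIoo_one ha0 hx
  have hC := castne_s hx'
  simp only [bket2, sqTermD, gB, gB1, gB2, gB3, ur, hF x hx, hF1 x hx, hF2 x hx, hF3 x hx,
    Complex.star_def, map_sub, map_mul, Complex.conj_ofReal]
  push_cast
  field_simp [hC]
  ring

lemma bket2_gC_neg (A B : ℂ) {f f1 f2 f3 : ℝ → ℂ} {b : ℝ} (hb0 : b ≤ 0) (hb : -1 < b)
    (hF : ∀ x ∈ Ioo (-1:ℝ) b, f x = A + B*(x:ℂ)) (hF1 : ∀ x ∈ Ioo (-1:ℝ) b, f1 x = B)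
    (hF2 : ∀ x ∈ Ioo (-1:ℝ) b, f2 x = 0) (hF3 : ∀ x ∈ Ioo (-1:ℝ) b, f3 x = 0) :
    Tendsto (bket2 f f1 f2 f3 gC gC1 gC2 gC3) atNegOne (nhds (-4*B)) := by
  have hE := tendsto_E_atNegOne A B (fun _ => (0:ℝ)) (fun x => -(1-x)^2) (fun _ => (0:ℝ))
    (fun x => -2*(1-x)) (by fun_prop) (by fun_prop) (by fun_prop) (by fun_prop)
  have hval : A * (((0:ℝ)):ℂ) + B * ((-(1-(-1:ℝ))^2 : ℝ):ℂ) = -4*B := by push_cast; ring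
  rw [hval] at hE
  apply hE.congr'
  filter_upwards [Ioo_mem_atNegOne hb] with x hx
  have hx' := subIoo_neg hb0 hx
  have hC := castne_a hx'
  simp only [bket2, sqTermD, gC, gC1, gC2, gC3, vr, hF x hx, hF1 x hx, hF2 x hx, hF3 x hx,
    Complex.star_def, map_sub, map_mul, Complex.conj_ofReal]
  push_cast
  field_simp [hC]
  ring

lemma bket2_gD_neg (A B : ℂ) {f f1 f2 f3 : ℝ → ℂ} {b : ℝ} (hb0 : b ≤ 0) (hb : -1 < b)
    (hF : ∀ x ∈ Ioo (-1:ℝ) b, f x = A + B*(x:ℂ)) (hF1 : ∀ x ∈ Ioo (-1:ℝ) b, f1 x = B)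
    (hF2 : ∀ x ∈ Ioo (-1:ℝ) b, f2 x = 0) (hF3 : ∀ x ∈ Ioo (-1:ℝ) b, f3 x = 0) :
    Tendsto (bket2 f f1 f2 f3 gD gD1 gD2 gD3) atNegOne (nhds (-4*A + 4*B)) := by
  have hE := tendsto_E_atNegOne A B (fun x => (1-x)*(1+3*x) + 2*(1-x^2))
    (fun x => x*(1-x)*(1+3*x) + (1-x)^2*(1+x) + 2*x*(1-x^2))
    (fun x => 2*(1-x)) (fun x => -2*(1-x)*(1+x) + 2*x*(1-x))
    (by fun_prop) (by fun_prop) (by fun_prop) (by fun_prop)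
  have hval : A * ((((1-(-1:ℝ))*(1+3*(-1)) + 2*(1-(-1:ℝ)^2) :ℝ)):ℂ)
      + B * ((((-1:ℝ)*(1-(-1:ℝ))*(1+3*(-1)) + (1-(-1:ℝ))^2*(1+(-1)) + 2*(-1)*(1-(-1:ℝ)^2) :ℝ)):ℂ)
      = -4*A + 4*B := by push_cast; ring
  rw [hval] at hE
  apply hE.congr'
  filter_upwards [Ioo_mem_atNegOne hb] with x hx
  have hx' := subIoo_neg hb0 hx
  have hC := castne_a hx'
  simp only [bket2, sqTermD, gD, gD1, gD2, gD3, vr, hF x hx, hF1 x hx, hF2 x hx, hF3 x hx,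
    Complex.star_def, map_sub, map_mul, Complex.conj_ofReal]
  push_cast
  field_simp [hC]
  ring

lemma bket2_gA_neg (A B : ℂ) {f f1 f2 f3 : ℝ → ℂ} {b : ℝ} (hb0 : b ≤ 0) (hb : -1 < b)
    (hF : ∀ x ∈ Ioo (-1:ℝ) b, f x = A + B*(x:ℂ)) (hF1 : ∀ x ∈ Ioo (-1:ℝ) b, f1 x = B)
    (hF2 : ∀ x ∈ Ioo (-1:ℝ) b, f2 x = 0) (hF3 : ∀ x ∈ Ioo (-1:ℝ) b, f3 x = 0) :
    Tendsto (bket2 f f1 f2 f3 gA gA1 gA2 gA3) atNegOne (nhds 0) := by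
  have hc2 : ContinuousAt (fun x:ℝ => -(1+x)^2 - 2*(1-x^2)*Real.log (1-x)) (-1) := by
    apply ContinuousAt.sub (by fun_prop)
    exact ContinuousAt.mul (by fun_prop) contAt_log_s
  have hE := tendsto_E2_atNegOne A B (fun _ => (0:ℝ))
    (fun x => -(1+x)^2 - 2*(1-x^2)*Real.log (1-x)) (by fun_prop) hc2
  have hval : A * (((0:ℝ)):ℂ)
      + B * (((-(1+(-1:ℝ))^2 - 2*(1-(-1:ℝ)^2)*Real.log (1-(-1:ℝ))) : ℝ):ℂ) = 0 := by
    norm_num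
  rw [hval] at hE
  apply hE.congr'
  filter_upwards [Ioo_mem_atNegOne hb] with x hx
  have hx' := subIoo_neg hb0 hx
  have hC := castne_s hx'
  simp only [bket2, sqTermD, gA, gA1, gA2, gA3, ur, hF x hx, hF1 x hx, hF2 x hx, hF3 x hx,
    Complex.star_def, map_sub, map_mul, Complex.conj_ofReal]
  push_cast
  field_simp [hC]
  ring

lemma bket2_gB_neg (A B : ℂ) {f f1 f2 f3 : ℝ → ℂ} {b : ℝ} (hb0 : b ≤ 0) (hb : -1 < b)
    (hF : ∀ x ∈ Ioo (-1:ℝ) b, f x = A + B*(x:ℂ)) (hF1 : ∀ x ∈ Ioo (-1:ℝ) b, f1 x = B)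
    (hF2 : ∀ x ∈ Ioo (-1:ℝ) b, f2 x = 0) (hF3 : ∀ x ∈ Ioo (-1:ℝ) b, f3 x = 0) :
    Tendsto (bket2 f f1 f2 f3 gB gB1 gB2 gB3) atNegOne (nhds 0) := by
  have hc1 : ContinuousAt (fun x:ℝ => -(1+x)*(1-3*x) - 2*(1-x^2)*(Real.log (1-x)+1)) (-1) := by
    apply ContinuousAt.sub (by fun_prop)
    exact ContinuousAt.mul (by fun_prop) (contAt_log_s.add (by fun_prop))
  have hc2 : ContinuousAt (fun x:ℝ => -x*(1+x)*(1-3*x) + (1+x)^2*(1-x)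
      - 2*(1-x^2)*(1-x)*Real.log (1-x) - 2*x*(1-x^2)*(Real.log (1-x)+1)) (-1) := by
    apply ContinuousAt.sub
    apply ContinuousAt.sub (by fun_prop)
    · exact ContinuousAt.mul (by fun_prop) contAt_log_s
    · exact ContinuousAt.mul (by fun_prop) (contAt_log_s.add (by fun_prop))
  have hE := tendsto_E2_atNegOne A B
    (fun x => -(1+x)*(1-3*x) - 2*(1-x^2)*(Real.log (1-x)+1))
    (fun x => -x*(1+x)*(1-3*x) + (1+x)^2*(1-x)
      - 2*(1-x^2)*(1-x)*Real.log (1-x) - 2*x*(1-x^2)*(Real.log (1-x)+1)) hc1 hc2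
  have hval : A * (((-(1+(-1:ℝ))*(1-3*(-1)) - 2*(1-(-1:ℝ)^2)*(Real.log (1-(-1:ℝ))+1)) : ℝ):ℂ)
      + B * (((-(-1:ℝ)*(1+(-1:ℝ))*(1-3*(-1)) + (1+(-1:ℝ))^2*(1-(-1))
      - 2*(1-(-1:ℝ)^2)*(1-(-1))*Real.log (1-(-1:ℝ)) - 2*(-1:ℝ)*(1-(-1:ℝ)^2)*(Real.log (1-(-1:ℝ))+1)) : ℝ):ℂ)
      = 0 := by norm_num
  rw [hval] at hE
  apply hE.congr'
  filter_upwards [Ioo_mem_atNegOne hb] with x hx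
  have hx' := subIoo_neg hb0 hx
  have hC := castne_s hx'
  simp only [bket2, sqTermD, gB, gB1, gB2, gB3, ur, hF x hx, hF1 x hx, hF2 x hx, hF3 x hx,
    Complex.star_def, map_sub, map_mul, Complex.conj_ofReal]
  push_cast
  field_simp [hC]
  ring

lemma bket2_gC_one (A B : ℂ) {f f1 f2 f3 : ℝ → ℂ} {a : ℝ} (ha0 : 0 ≤ a) (ha : a < 1)
    (hF : ∀ x ∈ Ioo a 1, f x = A + B*(x:ℂ)) (hF1 : ∀ x ∈ Ioo a 1, f1 x = B)
    (hF2 : ∀ x ∈ Ioo a 1, f2 x = 0) (hF3 : ∀ x ∈ Ioo a 1, f3 x = 0) :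
    Tendsto (bket2 f f1 f2 f3 gC gC1 gC2 gC3) atOne (nhds 0) := by
  have hc2 : ContinuousAt (fun x:ℝ => -(1-x)^2 - 2*(1-x^2)*Real.log (1+x)) 1 := by
    apply ContinuousAt.sub (by fun_prop)
    exact ContinuousAt.mul (by fun_prop) contAt_log_a
  have hE := tendsto_E2_atOne A B (fun _ => (0:ℝ))
    (fun x => -(1-x)^2 - 2*(1-x^2)*Real.log (1+x)) (by fun_prop) hc2
  have hval : A * (((0:ℝ)):ℂ)
      + B * (((-(1-(1:ℝ))^2 - 2*(1-(1:ℝ)^2)*Real.log (1+(1:ℝ))) : ℝ):ℂ) = 0 := by norm_num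
  rw [hval] at hE
  apply hE.congr'
  filter_upwards [Ioo_mem_atOne ha] with x hx
  have hx' := subIoo_one ha0 hx
  have hC := castne_a hx'
  simp only [bket2, sqTermD, gC, gC1, gC2, gC3, vr, hF x hx, hF1 x hx, hF2 x hx, hF3 x hx,
    Complex.star_def, map_sub, map_mul, Complex.conj_ofReal]
  push_cast
  field_simp [hC]
  ring

lemma bket2_gD_one (A B : ℂ) {f f1 f2 f3 : ℝ → ℂ} {a : ℝ} (ha0 : 0 ≤ a) (ha : a < 1)
    (hF : ∀ x ∈ Ioo a 1, f x = A + B*(x:ℂ)) (hF1 : ∀ x ∈ Ioo a 1, f1 x = B)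
    (hF2 : ∀ x ∈ Ioo a 1, f2 x = 0) (hF3 : ∀ x ∈ Ioo a 1, f3 x = 0) :
    Tendsto (bket2 f f1 f2 f3 gD gD1 gD2 gD3) atOne (nhds 0) := by
  have hc1 : ContinuousAt (fun x:ℝ => (1-x)*(1+3*x) + 2*(1-x^2)*(Real.log (1+x)+1)) 1 := by
    apply ContinuousAt.add (by fun_prop)
    exact ContinuousAt.mul (by fun_prop) (contAt_log_a.add (by fun_prop))
  have hc2 : ContinuousAt (fun x:ℝ => x*(1-x)*(1+3*x) + (1-x)^2*(1+x)
      - 2*(1-x^2)*(1+x)*Real.log (1+x) + 2*x*(1-x^2)*(Real.log (1+x)+1)) 1 := by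
    apply ContinuousAt.add
    apply ContinuousAt.sub (by fun_prop)
    · exact ContinuousAt.mul (by fun_prop) contAt_log_a
    · exact ContinuousAt.mul (by fun_prop) (contAt_log_a.add (by fun_prop))
  have hE := tendsto_E2_atOne A B
    (fun x => (1-x)*(1+3*x) + 2*(1-x^2)*(Real.log (1+x)+1))
    (fun x => x*(1-x)*(1+3*x) + (1-x)^2*(1+x)
      - 2*(1-x^2)*(1+x)*Real.log (1+x) + 2*x*(1-x^2)*(Real.log (1+x)+1)) hc1 hc2
  have hval : A * ((((1-(1:ℝ))*(1+3*1) + 2*(1-(1:ℝ)^2)*(Real.log (1+(1:ℝ))+1)) : ℝ):ℂ)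
      + B * ((((1:ℝ)*(1-(1:ℝ))*(1+3*1) + (1-(1:ℝ))^2*(1+1)
      - 2*(1-(1:ℝ)^2)*(1+1)*Real.log (1+(1:ℝ)) + 2*(1:ℝ)*(1-(1:ℝ)^2)*(Real.log (1+(1:ℝ))+1)) : ℝ):ℂ)
      = 0 := by norm_num
  rw [hval] at hE
  apply hE.congr'
  filter_upwards [Ioo_mem_atOne ha] with x hx
  have hx' := subIoo_one ha0 hx
  have hC := castne_a hx'
  simp only [bket2, sqTermD, gD, gD1, gD2, gD3, vr, hF x hx, hF1 x hx, hF2 x hx, hF3 x hx,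
    Complex.star_def, map_sub, map_mul, Complex.conj_ofReal]
  push_cast
  field_simp [hC]
  ring

end Cases

/-- **Proposition (Littlejohn–Wicks).** The four functions `f₁, f₂, f₃, f₄ ∈ Δ_{2,max} ∩ C⁴[-1,1]`
with `f₁ ≡ 1` near `1`, `f₁ ≡ 0` near `-1`; `f₂ ≡ 0` near `1`, `f₂ ≡ 1` near `-1`;
`f₃ = x` near `1`, `f₃ ≡ 0` near `-1`; `f₄ ≡ 0` near `1`, `f₄ = x` near `-1`,
are linearly independent modulo `Δ_{2,min}`. -/
theorem BC_functions_linearly_independent_mod_minimal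
    (p p1 p2 p3 p4 q q1 q2 q3 q4 r r1 r2 r3 r4 s s1 s2 s3 s4 : ℝ → ℂ)
    (hp : Delta2Max p p1 p2 p3 p4) (hq : Delta2Max q q1 q2 q3 q4)
    (hr : Delta2Max r r1 r2 r3 r4) (hs : Delta2Max s s1 s2 s3 s4)
    (hpC : ContDiffOn ℝ 4 p (Icc (-1:ℝ) 1)) (hqC : ContDiffOn ℝ 4 q (Icc (-1:ℝ) 1))
    (hrC : ContDiffOn ℝ 4 r (Icc (-1:ℝ) 1)) (hsC : ContDiffOn ℝ 4 s (Icc (-1:ℝ) 1))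
    (hp1 : ∃ ε > (0:ℝ), ∀ x ∈ Ioo (1 - ε) (1:ℝ), p x = 1)
    (hp2 : ∃ ε > (0:ℝ), ∀ x ∈ Ioo (-1:ℝ) (-1 + ε), p x = 0)
    (hq1 : ∃ ε > (0:ℝ), ∀ x ∈ Ioo (1 - ε) (1:ℝ), q x = 0)
    (hq2 : ∃ ε > (0:ℝ), ∀ x ∈ Ioo (-1:ℝ) (-1 + ε), q x = 1)
    (hr1 : ∃ ε > (0:ℝ), ∀ x ∈ Ioo (1 - ε) (1:ℝ), r x = (x : ℂ))
    (hr2 : ∃ ε > (0:ℝ), ∀ x ∈ Ioo (-1:ℝ) (-1 + ε), r x = 0)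
    (hs1 : ∃ ε > (0:ℝ), ∀ x ∈ Ioo (1 - ε) (1:ℝ), s x = 0)
    (hs2 : ∃ ε > (0:ℝ), ∀ x ∈ Ioo (-1:ℝ) (-1 + ε), s x = (x : ℂ))
    (α₁ α₂ α₃ α₄ : ℂ)
    (hmin : Delta2Min
      (fun x => α₁ * p x + α₂ * q x + α₃ * r x + α₄ * s x)
      (fun x => α₁ * p1 x + α₂ * q1 x + α₃ * r1 x + α₄ * s1 x)
      (fun x => α₁ * p2 x + α₂ * q2 x + α₃ * r2 x + α₄ * s2 x)
      (fun x => α₁ * p3 x + α₂ * q3 x + α₃ * r3 x + α₄ * s3 x)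
      (fun x => α₁ * p4 x + α₂ * q4 x + α₃ * r4 x + α₄ * s4 x)) :
    α₁ = 0 ∧ α₂ = 0 ∧ α₃ = 0 ∧ α₄ = 0 := by
  obtain ⟨εp, hεp, hp1'⟩ := hp1
  obtain ⟨εq, hεq, hq1'⟩ := hq1
  obtain ⟨εr, hεr, hr1'⟩ := hr1
  obtain ⟨εs, hεs, hs1'⟩ := hs1
  obtain ⟨δp, hδp, hp2'⟩ := hp2
  obtain ⟨δq, hδq, hq2'⟩ := hq2
  obtain ⟨δr, hδr, hr2'⟩ := hr2
  obtain ⟨δs, hδs, hs2'⟩ := hs2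
  set a : ℝ := max (max (1-εp) (1-εq)) (max (max (1-εr) (1-εs)) 0) with ha_def
  have hap : 1-εp ≤ a := (le_max_left _ _).trans (le_max_left _ _)
  have haq : 1-εq ≤ a := (le_max_right _ _).trans (le_max_left _ _)
  have har : 1-εr ≤ a := ((le_max_left _ _).trans (le_max_left _ _)).trans (le_max_right _ _)
  have has : 1-εs ≤ a := ((le_max_right _ _).trans (le_max_left _ _)).trans (le_max_right _ _)
  have ha0 : (0:ℝ) ≤ a := (le_max_right _ _).trans (le_max_right _ _)
  have ha1 : a < 1 := by
    apply max_lt (max_lt (by linarith) (by linarith))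
    exact max_lt (max_lt (by linarith) (by linarith)) one_pos
  set b : ℝ := min (min (-1+δp) (-1+δq)) (min (min (-1+δr) (-1+δs)) 0) with hb_def
  have hbp : b ≤ -1+δp := le_trans (min_le_left _ _) (min_le_left _ _)
  have hbq : b ≤ -1+δq := le_trans (min_le_left _ _) (min_le_right _ _)
  have hbr : b ≤ -1+δr := le_trans (min_le_right _ _) (le_trans (min_le_left _ _) (min_le_left _ _))
  have hbs : b ≤ -1+δs := le_trans (min_le_right _ _) (le_trans (min_le_left _ _) (min_le_right _ _))
  have hb0 : b ≤ 0 := le_trans (min_le_right _ _) (min_le_right _ _)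
  have hbm : (-1:ℝ) < b := by
    apply lt_min (lt_min (by linarith) (by linarith))
    exact lt_min (lt_min (by linarith) (by linarith)) (by norm_num)
  have hsub1 : Ioo a 1 ⊆ Ioo (-1:ℝ) 1 := subIoo_one ha0
  have hsubm : Ioo (-1:ℝ) b ⊆ Ioo (-1:ℝ) 1 := subIoo_neg hb0
  -- values near 1
  have hP : ∀ x ∈ Ioo a 1, p x = 1 := fun x hx => hp1' x ⟨lt_of_le_of_lt hap hx.1, hx.2⟩
  have hQ : ∀ x ∈ Ioo a 1, q x = 0 := fun x hx => hq1' x ⟨lt_of_le_of_lt haq hx.1, hx.2⟩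
  have hR : ∀ x ∈ Ioo a 1, r x = (x:ℂ) := fun x hx => hr1' x ⟨lt_of_le_of_lt har hx.1, hx.2⟩
  have hS : ∀ x ∈ Ioo a 1, s x = 0 := fun x hx => hs1' x ⟨lt_of_le_of_lt has hx.1, hx.2⟩
  -- derivatives near 1
  have hP1 : ∀ x ∈ Ioo a 1, p1 x = 0 :=
    locACOn_deriv_affine hp.1 hp.2.1.continuousOn hsub1 1 0
      (fun x hx => by rw [hP x hx]; ring)
  have hP2 : ∀ x ∈ Ioo a 1, p2 x = 0 :=
    locACOn_deriv_affine hp.2.1 hp.2.2.1.continuousOn hsub1 0 0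
      (fun x hx => by rw [hP1 x hx]; ring)
  have hP3 : ∀ x ∈ Ioo a 1, p3 x = 0 :=
    locACOn_deriv_affine hp.2.2.1 hp.2.2.2.1.continuousOn hsub1 0 0
      (fun x hx => by rw [hP2 x hx]; ring)
  have hQ1 : ∀ x ∈ Ioo a 1, q1 x = 0 :=
    locACOn_deriv_affine hq.1 hq.2.1.continuousOn hsub1 0 0
      (fun x hx => by rw [hQ x hx]; ring)
  have hQ2 : ∀ x ∈ Ioo a 1, q2 x = 0 :=
    locACOn_deriv_affine hq.2.1 hq.2.2.1.continuousOn hsub1 0 0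
      (fun x hx => by rw [hQ1 x hx]; ring)
  have hQ3 : ∀ x ∈ Ioo a 1, q3 x = 0 :=
    locACOn_deriv_affine hq.2.2.1 hq.2.2.2.1.continuousOn hsub1 0 0
      (fun x hx => by rw [hQ2 x hx]; ring)
  have hR1 : ∀ x ∈ Ioo a 1, r1 x = 1 :=
    locACOn_deriv_affine hr.1 hr.2.1.continuousOn hsub1 0 1
      (fun x hx => by rw [hR x hx]; ring)
  have hR2 : ∀ x ∈ Ioo a 1, r2 x = 0 :=
    locACOn_deriv_affine hr.2.1 hr.2.2.1.continuousOn hsub1 1 0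
      (fun x hx => by rw [hR1 x hx]; ring)
  have hR3 : ∀ x ∈ Ioo a 1, r3 x = 0 :=
    locACOn_deriv_affine hr.2.2.1 hr.2.2.2.1.continuousOn hsub1 0 0
      (fun x hx => by rw [hR2 x hx]; ring)
  have hS1 : ∀ x ∈ Ioo a 1, s1 x = 0 :=
    locACOn_deriv_affine hs.1 hs.2.1.continuousOn hsub1 0 0
      (fun x hx => by rw [hS x hx]; ring)
  have hS2 : ∀ x ∈ Ioo a 1, s2 x = 0 :=
    locACOn_deriv_affine hs.2.1 hs.2.2.1.continuousOn hsub1 0 0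
      (fun x hx => by rw [hS1 x hx]; ring)
  have hS3 : ∀ x ∈ Ioo a 1, s3 x = 0 :=
    locACOn_deriv_affine hs.2.2.1 hs.2.2.2.1.continuousOn hsub1 0 0
      (fun x hx => by rw [hS2 x hx]; ring)
  -- values near -1
  have hPm : ∀ x ∈ Ioo (-1:ℝ) b, p x = 0 := fun x hx => hp2' x ⟨hx.1, lt_of_lt_of_le hx.2 hbp⟩
  have hQm : ∀ x ∈ Ioo (-1:ℝ) b, q x = 1 := fun x hx => hq2' x ⟨hx.1, lt_of_lt_of_le hx.2 hbq⟩
  have hRm : ∀ x ∈ Ioo (-1:ℝ) b, r x = 0 := fun x hx => hr2' x ⟨hx.1, lt_of_lt_of_le hx.2 hbr⟩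
  have hSm : ∀ x ∈ Ioo (-1:ℝ) b, s x = (x:ℂ) := fun x hx => hs2' x ⟨hx.1, lt_of_lt_of_le hx.2 hbs⟩
  have hPm1 : ∀ x ∈ Ioo (-1:ℝ) b, p1 x = 0 :=
    locACOn_deriv_affine hp.1 hp.2.1.continuousOn hsubm 0 0
      (fun x hx => by rw [hPm x hx]; ring)
  have hPm2 : ∀ x ∈ Ioo (-1:ℝ) b, p2 x = 0 :=
    locACOn_deriv_affine hp.2.1 hp.2.2.1.continuousOn hsubm 0 0
      (fun x hx => by rw [hPm1 x hx]; ring)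
  have hPm3 : ∀ x ∈ Ioo (-1:ℝ) b, p3 x = 0 :=
    locACOn_deriv_affine hp.2.2.1 hp.2.2.2.1.continuousOn hsubm 0 0
      (fun x hx => by rw [hPm2 x hx]; ring)
  have hQm1 : ∀ x ∈ Ioo (-1:ℝ) b, q1 x = 0 :=
    locACOn_deriv_affine hq.1 hq.2.1.continuousOn hsubm 1 0
      (fun x hx => by rw [hQm x hx]; ring)
  have hQm2 : ∀ x ∈ Ioo (-1:ℝ) b, q2 x = 0 :=
    locACOn_deriv_affine hq.2.1 hq.2.2.1.continuousOn hsubm 0 0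
      (fun x hx => by rw [hQm1 x hx]; ring)
  have hQm3 : ∀ x ∈ Ioo (-1:ℝ) b, q3 x = 0 :=
    locACOn_deriv_affine hq.2.2.1 hq.2.2.2.1.continuousOn hsubm 0 0
      (fun x hx => by rw [hQm2 x hx]; ring)
  have hRm1 : ∀ x ∈ Ioo (-1:ℝ) b, r1 x = 0 :=
    locACOn_deriv_affine hr.1 hr.2.1.continuousOn hsubm 0 0
      (fun x hx => by rw [hRm x hx]; ring)
  have hRm2 : ∀ x ∈ Ioo (-1:ℝ) b, r2 x = 0 :=
    locACOn_deriv_affine hr.2.1 hr.2.2.1.continuousOn hsubm 0 0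
      (fun x hx => by rw [hRm1 x hx]; ring)
  have hRm3 : ∀ x ∈ Ioo (-1:ℝ) b, r3 x = 0 :=
    locACOn_deriv_affine hr.2.2.1 hr.2.2.2.1.continuousOn hsubm 0 0
      (fun x hx => by rw [hRm2 x hx]; ring)
  have hSm1 : ∀ x ∈ Ioo (-1:ℝ) b, s1 x = 1 :=
    locACOn_deriv_affine hs.1 hs.2.1.continuousOn hsubm 0 1
      (fun x hx => by rw [hSm x hx]; ring)
  have hSm2 : ∀ x ∈ Ioo (-1:ℝ) b, s2 x = 0 :=
    locACOn_deriv_affine hs.2.1 hs.2.2.1.continuousOn hsubm 1 0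
      (fun x hx => by rw [hSm1 x hx]; ring)
  have hSm3 : ∀ x ∈ Ioo (-1:ℝ) b, s3 x = 0 :=
    locACOn_deriv_affine hs.2.2.1 hs.2.2.2.1.continuousOn hsubm 0 0
      (fun x hx => by rw [hSm2 x hx]; ring)
  -- combination near 1
  have hFa : ∀ x ∈ Ioo a 1, α₁ * p x + α₂ * q x + α₃ * r x + α₄ * s x = α₁ + α₃*(x:ℂ) :=
    fun x hx => by rw [hP x hx, hQ x hx, hR x hx, hS x hx]; ring
  have hFa1 : ∀ x ∈ Ioo a 1, α₁ * p1 x + α₂ * q1 x + α₃ * r1 x + α₄ * s1 x = α₃ :=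
    fun x hx => by rw [hP1 x hx, hQ1 x hx, hR1 x hx, hS1 x hx]; ring
  have hFa2 : ∀ x ∈ Ioo a 1, α₁ * p2 x + α₂ * q2 x + α₃ * r2 x + α₄ * s2 x = 0 :=
    fun x hx => by rw [hP2 x hx, hQ2 x hx, hR2 x hx, hS2 x hx]; ring
  have hFa3 : ∀ x ∈ Ioo a 1, α₁ * p3 x + α₂ * q3 x + α₃ * r3 x + α₄ * s3 x = 0 :=
    fun x hx => by rw [hP3 x hx, hQ3 x hx, hR3 x hx, hS3 x hx]; ring
  -- combination near -1
  have hFm : ∀ x ∈ Ioo (-1:ℝ) b, α₁ * p x + α₂ * q x + α₃ * r x + α₄ * s x = α₂ + α₄*(x:ℂ) :=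
    fun x hx => by rw [hPm x hx, hQm x hx, hRm x hx, hSm x hx]; ring
  have hFm1 : ∀ x ∈ Ioo (-1:ℝ) b, α₁ * p1 x + α₂ * q1 x + α₃ * r1 x + α₄ * s1 x = α₄ :=
    fun x hx => by rw [hPm1 x hx, hQm1 x hx, hRm1 x hx, hSm1 x hx]; ring
  have hFm2 : ∀ x ∈ Ioo (-1:ℝ) b, α₁ * p2 x + α₂ * q2 x + α₃ * r2 x + α₄ * s2 x = 0 :=
    fun x hx => by rw [hPm2 x hx, hQm2 x hx, hRm2 x hx, hSm2 x hx]; ring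
  have hFm3 : ∀ x ∈ Ioo (-1:ℝ) b, α₁ * p3 x + α₂ * q3 x + α₃ * r3 x + α₄ * s3 x = 0 :=
    fun x hx => by rw [hPm3 x hx, hQm3 x hx, hRm3 x hx, hSm3 x hx]; ring
  haveI hne1 : atOne.NeBot := atOne_neBot
  haveI hnem : atNegOne.NeBot := atNegOne_neBot
  -- test against gA
  obtain ⟨LA, hLA1, hLAm⟩ := hmin.2 gA gA1 gA2 gA3 gA4 D2M_gA
  have e1A := bket2_gA_one α₁ α₃
    (f := fun x => α₁ * p x + α₂ * q x + α₃ * r x + α₄ * s x)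
    (f1 := fun x => α₁ * p1 x + α₂ * q1 x + α₃ * r1 x + α₄ * s1 x)
    (f2 := fun x => α₁ * p2 x + α₂ * q2 x + α₃ * r2 x + α₄ * s2 x)
    (f3 := fun x => α₁ * p3 x + α₂ * q3 x + α₃ * r3 x + α₄ * s3 x)
    ha0 ha1 hFa hFa1 hFa2 hFa3
  have emA := bket2_gA_neg α₂ α₄
    (f := fun x => α₁ * p x + α₂ * q x + α₃ * r x + α₄ * s x)
    (f1 := fun x => α₁ * p1 x + α₂ * q1 x + α₃ * r1 x + α₄ * s1 x)
    (f2 := fun x => α₁ * p2 x + α₂ * q2 x + α₃ * r2 x + α₄ * s2 x)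
    (f3 := fun x => α₁ * p3 x + α₂ * q3 x + α₃ * r3 x + α₄ * s3 x)
    hb0 hbm hFm hFm1 hFm2 hFm3
  have eqA : -4*α₃ = (0:ℂ) := by
    rw [← tendsto_nhds_unique hLAm emA]
    exact tendsto_nhds_unique e1A hLA1
  -- test against gB
  obtain ⟨LB, hLB1, hLBm⟩ := hmin.2 gB gB1 gB2 gB3 gB4 D2M_gB
  have e1B := bket2_gB_one α₁ α₃
    (f := fun x => α₁ * p x + α₂ * q x + α₃ * r x + α₄ * s x)
    (f1 := fun x => α₁ * p1 x + α₂ * q1 x + α₃ * r1 x + α₄ * s1 x)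
    (f2 := fun x => α₁ * p2 x + α₂ * q2 x + α₃ * r2 x + α₄ * s2 x)
    (f3 := fun x => α₁ * p3 x + α₂ * q3 x + α₃ * r3 x + α₄ * s3 x)
    ha0 ha1 hFa hFa1 hFa2 hFa3
  have emB := bket2_gB_neg α₂ α₄
    (f := fun x => α₁ * p x + α₂ * q x + α₃ * r x + α₄ * s x)
    (f1 := fun x => α₁ * p1 x + α₂ * q1 x + α₃ * r1 x + α₄ * s1 x)
    (f2 := fun x => α₁ * p2 x + α₂ * q2 x + α₃ * r2 x + α₄ * s2 x)
    (f3 := fun x => α₁ * p3 x + α₂ * q3 x + α₃ * r3 x + α₄ * s3 x)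
    hb0 hbm hFm hFm1 hFm2 hFm3
  have eqB : 4*α₁ + 4*α₃ = (0:ℂ) := by
    rw [← tendsto_nhds_unique hLBm emB]
    exact tendsto_nhds_unique e1B hLB1
  -- test against gC
  obtain ⟨LC, hLC1, hLCm⟩ := hmin.2 gC gC1 gC2 gC3 gC4 D2M_gC
  have emC := bket2_gC_neg α₂ α₄
    (f := fun x => α₁ * p x + α₂ * q x + α₃ * r x + α₄ * s x)
    (f1 := fun x => α₁ * p1 x + α₂ * q1 x + α₃ * r1 x + α₄ * s1 x)
    (f2 := fun x => α₁ * p2 x + α₂ * q2 x + α₃ * r2 x + α₄ * s2 x)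
    (f3 := fun x => α₁ * p3 x + α₂ * q3 x + α₃ * r3 x + α₄ * s3 x)
    hb0 hbm hFm hFm1 hFm2 hFm3
  have e1C := bket2_gC_one α₁ α₃
    (f := fun x => α₁ * p x + α₂ * q x + α₃ * r x + α₄ * s x)
    (f1 := fun x => α₁ * p1 x + α₂ * q1 x + α₃ * r1 x + α₄ * s1 x)
    (f2 := fun x => α₁ * p2 x + α₂ * q2 x + α₃ * r2 x + α₄ * s2 x)
    (f3 := fun x => α₁ * p3 x + α₂ * q3 x + α₃ * r3 x + α₄ * s3 x)
    ha0 ha1 hFa hFa1 hFa2 hFa3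
  have eqC : -4*α₄ = (0:ℂ) := by
    rw [← tendsto_nhds_unique hLC1 e1C]
    exact tendsto_nhds_unique emC hLCm
  -- test against gD
  obtain ⟨LD, hLD1, hLDm⟩ := hmin.2 gD gD1 gD2 gD3 gD4 D2M_gD
  have emD := bket2_gD_neg α₂ α₄
    (f := fun x => α₁ * p x + α₂ * q x + α₃ * r x + α₄ * s x)
    (f1 := fun x => α₁ * p1 x + α₂ * q1 x + α₃ * r1 x + α₄ * s1 x)
    (f2 := fun x => α₁ * p2 x + α₂ * q2 x + α₃ * r2 x + α₄ * s2 x)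
    (f3 := fun x => α₁ * p3 x + α₂ * q3 x + α₃ * r3 x + α₄ * s3 x)
    hb0 hbm hFm hFm1 hFm2 hFm3
  have e1D := bket2_gD_one α₁ α₃
    (f := fun x => α₁ * p x + α₂ * q x + α₃ * r x + α₄ * s x)
    (f1 := fun x => α₁ * p1 x + α₂ * q1 x + α₃ * r1 x + α₄ * s1 x)
    (f2 := fun x => α₁ * p2 x + α₂ * q2 x + α₃ * r2 x + α₄ * s2 x)
    (f3 := fun x => α₁ * p3 x + α₂ * q3 x + α₃ * r3 x + α₄ * s3 x)
    ha0 ha1 hFa hFa1 hFa2 hFa3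
  have eqD : -4*α₂ + 4*α₄ = (0:ℂ) := by
    rw [← tendsto_nhds_unique hLD1 e1D]
    exact tendsto_nhds_unique emD hLDm
  refine ⟨?_, ?_, ?_, ?_⟩
  · linear_combination (eqB + eqA) / 4
  · linear_combination (-eqC - eqD) / 4
  · linear_combination -eqA / 4
  · linear_combination -eqC / 4
end
end

section
/- If f ∈ D(S), then lim_{x→1⁻}(1−x²)²f″(x) = 0 and lim_{x→−1⁺}(1−x²)²f″(x) = 0. -/
open MeasureTheory Set Filter

noncomputable section

/-! ### Auxiliary lemmas -/

lemma mem_atOne_Ioo {a : ℝ} (ha0 : -1 < a) (ha : a < 1) : Ioo a 1 ∈ atOne := by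
  rw [atOne]
  apply mem_nhdsWithin.2 ⟨Ioi a, isOpen_Ioi, ha, ?_⟩
  rintro x ⟨hx1, hx2⟩
  exact ⟨hx1, hx2.2⟩

lemma tendsto_neg_atOne : Tendsto (fun x : ℝ => -x) atOne atNegOne := by
  rw [atOne, atNegOne]
  refine tendsto_nhdsWithin_of_tendsto_nhds_of_eventually_within _ ?_ ?_
  · have h : Tendsto (fun x : ℝ => -x) (nhds 1) (nhds (-1)) := by
      simpa using (continuous_neg.tendsto (1:ℝ))
    exact h.mono_left nhdsWithin_le_nhds
  · filter_upwards [self_mem_nhdsWithin] with x hx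
    exact ⟨by linarith [hx.2], by linarith [hx.1]⟩

lemma tendsto_neg_atNegOne : Tendsto (fun x : ℝ => -x) atNegOne atOne := by
  rw [atOne, atNegOne]
  refine tendsto_nhdsWithin_of_tendsto_nhds_of_eventually_within _ ?_ ?_
  · have h : Tendsto (fun x : ℝ => -x) (nhds (-1)) (nhds 1) := by
      simpa using (continuous_neg.tendsto (-1:ℝ))
    exact h.mono_left nhdsWithin_le_nhds
  · filter_upwards [self_mem_nhdsWithin] with x hx
    exact ⟨by linarith [hx.2], by linarith [hx.1]⟩

lemma LocACOn.neg' {f f1 : ℝ → ℂ} (h : LocACOn f f1) :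
    LocACOn (fun x => -f x) (fun x => -f1 x) := by
  intro x hx y hy
  obtain ⟨hi, hv⟩ := h x hx y hy
  refine ⟨hi.neg, ?_⟩
  rw [intervalIntegral.integral_neg, ← hv]
  ring

lemma LocACOn.reflect {f f1 : ℝ → ℂ} (h : LocACOn f f1) :
    LocACOn (fun x => f (-x)) (fun x => -f1 (-x)) := by
  intro x hx y hy
  have hx' : -x ∈ Ioo (-1:ℝ) 1 := ⟨by linarith [hx.2], by linarith [hx.1]⟩
  have hy' : -y ∈ Ioo (-1:ℝ) 1 := ⟨by linarith [hy.2], by linarith [hy.1]⟩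
  constructor
  · have h1 := (h (-y) hy' (-x) hx').1
    have h2 := (IntervalIntegrable.iff_comp_neg (f := f1)).1 h1
    simp only [neg_neg] at h2
    exact h2.symm.neg
  · have hv := (h (-x) hx' (-y) hy').2
    have h3 : (∫ t in x..y, f1 (-t)) = ∫ t in (-y)..(-x), f1 t :=
      intervalIntegral.integral_comp_neg f1
    rw [intervalIntegral.integral_neg, h3, ← intervalIntegral.integral_symm, ← hv]

lemma exists_bound_one (F : ℝ → ℂ) (h : Tendsto F atOne (nhds 0)) :
    ∃ a : ℝ, 0 < a ∧ a < 1 ∧ ∀ x ∈ Ico a (1:ℝ), ‖F x‖ ≤ 1 := by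
  have hev : ∀ᶠ x in atOne, ‖F x‖ ≤ 1 := by
    filter_upwards [mem_map.1 (h (Metric.closedBall_mem_nhds (0:ℂ) one_pos))] with x hx
    simpa [Metric.mem_closedBall, dist_zero_right] using hx
  rw [atOne, eventually_nhdsWithin_iff, Metric.eventually_nhds_iff] at hev
  obtain ⟨ε, hε, hb⟩ := hev
  refine ⟨max (1 - ε/2) (1/2),
    lt_of_lt_of_le (by norm_num) (le_max_right _ _),
    max_lt (by linarith) (by norm_num), ?_⟩
  intro x hx
  have h1 : 1 - ε/2 ≤ x := le_trans (le_max_left _ _) hx.1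
  have h2 : (1:ℝ)/2 ≤ x := le_trans (le_max_right _ _) hx.1
  apply hb ?_ ⟨by linarith, hx.2⟩
  have : |x - 1| = 1 - x := by
    rw [abs_of_nonpos (by linarith [hx.2])]; ring
  rw [Real.dist_eq, this]
  linarith [hx.2]

/-- The central estimate: if `(1-x²)²f″ - 2(1-x²)f` is bounded near `1` and
`f ∈ L¹` near `1`, then `(1-x²)f(x) → 0` as `x → 1⁻`. -/
lemma key_lemma (f f1 f2 : ℝ → ℂ) (a C : ℝ) (ha0 : 0 < a) (ha1 : a < 1)
    (h01 : LocACOn f f1) (h12 : LocACOn f1 f2)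
    (hK : ∀ x ∈ Ico a (1:ℝ),
      ‖(((1 - x^2)^2 : ℝ) : ℂ) * f2 x - ((2*(1 - x^2) : ℝ) : ℂ) * f x‖ ≤ 1)
    (hC : ∀ s ∈ Ico a (1:ℝ), (∫ r in a..s, ‖f r‖) ≤ C) :
    Tendsto (fun x => ((1 - x^2 : ℝ) : ℂ) * f x) atOne (nhds 0) := by
  have haI : a ∈ Ioo (-1:ℝ) 1 := ⟨by linarith, ha1⟩
  set D : ℝ := ‖f a‖ + 2 * ‖f1 a‖ with hD
  set E : ℝ := 1 + 2 * C with hE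
  set G : ℝ → ℝ := fun x =>
    (1 - x^2) * D + E * ((1 - x^2) * Real.log (1 - a))
      - E * ((1 + x) * ((1 - x) * Real.log (1 - x))) with hG
  have hGt : Tendsto G atOne (nhds 0) := by
    have h1 : Continuous fun x : ℝ => (1 - x) * Real.log (1 - x) :=
      Real.continuous_mul_log.comp (continuous_const.sub continuous_id)
    have h2 : Continuous fun x : ℝ => 1 - x^2 := by continuity
    have hGcont : Continuous G := by
      rw [hG]
      exact ((h2.mul continuous_const).add
        (continuous_const.mul (h2.mul continuous_const))).sub
        (continuous_const.mul ((continuous_const.add continuous_id).mul h1))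
    have hlim := hGcont.tendsto 1
    have hval : G 1 = 0 := by simp [hG]
    rw [hval] at hlim
    exact hlim.mono_left (by rw [atOne]; exact nhdsWithin_le_nhds)
  apply squeeze_zero_norm' ?_ hGt
  filter_upwards [mem_atOne_Ioo (by linarith : (-1:ℝ) < a) ha1] with x hx
  obtain ⟨hax, hx1⟩ := hx
  have hxI : x ∈ Ioo (-1:ℝ) 1 := ⟨by linarith, hx1⟩
  have haxle : a ≤ x := le_of_lt hax
  have huIcc : Set.uIcc a x = Icc a x := uIcc_of_le haxle
  have hi1 : IntervalIntegrable f1 volume a x := (h01 a haI x hxI).1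
  have hi2 : IntervalIntegrable f2 volume a x := (h12 a haI x hxI).1
  have hIccsub : Icc a x ⊆ Ioo (-1:ℝ) 1 := fun r hr =>
    ⟨by linarith [hr.1], lt_of_le_of_lt hr.2 hx1⟩
  have hfeq : ∀ s ∈ Icc a x, f s = f a + ∫ r in a..s, f1 r := by
    intro s hs
    have h := (h01 a haI s (hIccsub hs)).2
    rw [← h]; ring
  have hfcont : ContinuousOn f (Icc a x) := by
    have h1 : ContinuousOn (fun s => f a + ∫ r in a..s, f1 r) (Icc a x) := by
      apply continuousOn_const.add
      have h2 := intervalIntegral.continuousOn_primitive_interval' hi1 left_mem_uIcc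
      rwa [huIcc] at h2
    exact h1.congr hfeq
  set J : ℝ → ℂ := fun s => ∫ r in a..s, f2 r with hJ
  have hJcont : ContinuousOn J (Icc a x) := by
    have h2 := intervalIntegral.continuousOn_primitive_interval' hi2 left_mem_uIcc
    rwa [huIcc] at h2
  -- Taylor-type representation
  have hrep : f x = f a + ((x - a : ℝ) : ℂ) * f1 a + ∫ s in a..x, J s := by
    have h0 : f x - f a = ∫ s in a..x, f1 s := (h01 a haI x hxI).2
    have h1 : ∀ s ∈ Set.uIcc a x, f1 s = f1 a + J s := by
      intro s hs
      rw [huIcc] at hs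
      have h := (h12 a haI s (hIccsub hs)).2
      have hJs : J s = ∫ t in a..s, f2 t := rfl
      rw [hJs, ← h]; ring
    have hJint : IntervalIntegrable J volume a x := by
      apply ContinuousOn.intervalIntegrable
      rwa [huIcc]
    rw [intervalIntegral.integral_congr h1,
      intervalIntegral.integral_add intervalIntegrable_const hJint,
      intervalIntegral.integral_const] at h0
    rw [Complex.real_smul] at h0
    linear_combination h0
  -- bound on the inner primitive
  have hJbound : ∀ s ∈ Icc a x, ‖J s‖ ≤ E * (1 - s)⁻¹ := by
    intro s hs
    have hs1 : s < 1 := lt_of_le_of_lt hs.2 hx1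
    have has : a ≤ s := hs.1
    have hs0 : 0 < 1 - s := by linarith
    have hsI : s ∈ Ioo (-1:ℝ) 1 := ⟨by linarith, hs1⟩
    have hi2s : IntervalIntegrable f2 volume a s := (h12 a haI s hsI).1
    have hptw : ∀ r ∈ Icc a s, ‖f2 r‖ ≤ ((1 - r)^2)⁻¹ + (1 - s)⁻¹ * (2 * ‖f r‖) := by
      intro r hr
      have hr1 : r < 1 := lt_of_le_of_lt hr.2 hs1
      have hr0 : 0 < r := lt_of_lt_of_le ha0 hr.1
      have hrs : r ≤ s := hr.2
      have hP : 0 < 1 - r^2 := by nlinarith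
      have hPr : 0 < 1 - r := by linarith
      have hPr2 : 1 - r ≤ 1 - r^2 := by nlinarith
      have hPs : 1 - s ≤ 1 - r^2 := by nlinarith
      have hKr := hK r ⟨hr.1, hr1⟩
      have hnm : ‖((2*(1 - r^2) : ℝ) : ℂ) * f r‖ = 2*(1 - r^2) * ‖f r‖ := by
        rw [norm_mul, Complex.norm_real, Real.norm_eq_abs, abs_of_nonneg (by positivity)]
      have h1 : (1 - r^2)^2 * ‖f2 r‖ ≤ 1 + 2*(1 - r^2) * ‖f r‖ := by
        have e1 : (((1 - r^2)^2 : ℝ) : ℂ) * f2 r =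
            ((((1 - r^2)^2 : ℝ) : ℂ) * f2 r - ((2*(1 - r^2) : ℝ) : ℂ) * f r)
              + ((2*(1 - r^2) : ℝ) : ℂ) * f r := by ring
        have e2 : (1 - r^2)^2 * ‖f2 r‖ = ‖(((1 - r^2)^2 : ℝ) : ℂ) * f2 r‖ := by
          rw [norm_mul, Complex.norm_real, Real.norm_eq_abs, abs_of_nonneg (by positivity)]
        rw [e2, e1]
        calc ‖_ + _‖ ≤ _ + _ := norm_add_le _ _
          _ ≤ 1 + 2*(1 - r^2) * ‖f r‖ := by rw [hnm]; exact add_le_add_left hKr _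
      have h2 : ‖f2 r‖ ≤ ((1 - r^2)^2)⁻¹ + (1 - r^2)⁻¹ * (2 * ‖f r‖) := by
        have hq : (0:ℝ) < (1 - r^2)^2 := by positivity
        rw [← mul_le_mul_iff_right₀ hq]
        calc (1 - r^2)^2 * ‖f2 r‖ ≤ 1 + 2*(1 - r^2) * ‖f r‖ := h1
          _ = (1 - r^2)^2 * (((1 - r^2)^2)⁻¹ + (1 - r^2)⁻¹ * (2 * ‖f r‖)) := by
              field_simp
              try ring
      refine h2.trans (add_le_add ?_ ?_)
      · exact inv_anti₀ (pow_pos hPr 2) (by nlinarith)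
      · exact mul_le_mul_of_nonneg_right (inv_anti₀ hs0 hPs)
          (by positivity)
  -- integrate the pointwise bound
    have hnormint : IntervalIntegrable (fun r => ‖f2 r‖) volume a s := hi2s.norm
    have hfnormint : IntervalIntegrable (fun r => ‖f r‖) volume a s := by
      apply ContinuousOn.intervalIntegrable
      rw [uIcc_of_le has]
      exact (hfcont.mono (Icc_subset_Icc_right hs.2)).norm
    have hinvcont : ContinuousOn (fun r : ℝ => ((1 - r)^2)⁻¹) (Set.uIcc a s) := by
      apply ContinuousOn.inv₀
      · fun_prop
      · intro r hr
        rw [uIcc_of_le has] at hr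
        have hr1 : r < 1 := lt_of_le_of_lt hr.2 hs1
        exact pow_ne_zero 2 (sub_ne_zero_of_ne (ne_of_lt hr1).symm)
    have hinvint : IntervalIntegrable (fun r : ℝ => ((1 - r)^2)⁻¹) volume a s :=
      hinvcont.intervalIntegrable
    have hrhsint : IntervalIntegrable
        (fun r => ((1 - r)^2)⁻¹ + (1 - s)⁻¹ * (2 * ‖f r‖)) volume a s :=
      hinvint.add (((hfnormint.const_mul 2).const_mul ((1 - s)⁻¹)))
    have hstep1 : ‖J s‖ ≤ ∫ r in a..s, ‖f2 r‖ :=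
      intervalIntegral.norm_integral_le_integral_norm has
    have hstep2 : (∫ r in a..s, ‖f2 r‖)
        ≤ ∫ r in a..s, (((1 - r)^2)⁻¹ + (1 - s)⁻¹ * (2 * ‖f r‖)) :=
      intervalIntegral.integral_mono_on has hnormint hrhsint hptw
    have hint1 : (∫ r in a..s, ((1 - r)^2)⁻¹) = (1 - s)⁻¹ - (1 - a)⁻¹ := by
      have hderiv : ∀ r ∈ Set.uIcc a s,
          HasDerivAt (fun u : ℝ => (1 - u)⁻¹) (((1 - r)^2)⁻¹) r := by
        intro r hr
        rw [uIcc_of_le has] at hr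
        have hr1 : r < 1 := lt_of_le_of_lt hr.2 hs1
        have h0 : (1 - r) ≠ 0 := ne_of_gt (by linarith)
        have hd : HasDerivAt (fun u : ℝ => 1 - u) (-1) r := by
          simpa using ((hasDerivAt_id r).const_sub (1:ℝ))
        have h3 := hd.inv h0
        exact h3.congr_deriv (by ring)
      rw [intervalIntegral.integral_eq_sub_of_hasDerivAt hderiv hinvint]
    have hint2 : (∫ r in a..s, (1 - s)⁻¹ * (2 * ‖f r‖))
        = (1 - s)⁻¹ * (2 * ∫ r in a..s, ‖f r‖) := by
      rw [intervalIntegral.integral_const_mul, intervalIntegral.integral_const_mul]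
    have hsplit : (∫ r in a..s, (((1 - r)^2)⁻¹ + (1 - s)⁻¹ * (2 * ‖f r‖)))
        = (∫ r in a..s, ((1 - r)^2)⁻¹) + ∫ r in a..s, (1 - s)⁻¹ * (2 * ‖f r‖) :=
      intervalIntegral.integral_add hinvint (((hfnormint.const_mul 2).const_mul ((1 - s)⁻¹)))
    have hCs := hC s ⟨has, hs1⟩
    have h1a : (0:ℝ) < (1 - a)⁻¹ := inv_pos.mpr (by linarith)
    have h1s : (0:ℝ) ≤ (1 - s)⁻¹ := le_of_lt (inv_pos.mpr hs0)
    have hlast : (1 - s)⁻¹ * (2 * ∫ r in a..s, ‖f r‖) ≤ (1 - s)⁻¹ * (2*C) :=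
      mul_le_mul_of_nonneg_left (by linarith) h1s
    have hEin : E * (1 - s)⁻¹ = (1 - s)⁻¹ + (1 - s)⁻¹ * (2*C) := by rw [hE]; ring
    calc ‖J s‖ ≤ _ := hstep1.trans hstep2
      _ = _ := hsplit
      _ = ((1 - s)⁻¹ - (1 - a)⁻¹) + (1 - s)⁻¹ * (2 * ∫ r in a..s, ‖f r‖) := by
          rw [hint1, hint2]
      _ ≤ E * (1 - s)⁻¹ := by rw [hEin]; linarith
  -- outer integral bound
  have hlog : (∫ s in a..x, (1 - s)⁻¹) = Real.log (1 - a) - Real.log (1 - x) := by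
    have hderiv : ∀ s ∈ Set.uIcc a x,
        HasDerivAt (fun u : ℝ => -Real.log (1 - u)) ((1 - s)⁻¹) s := by
      intro s hs
      rw [huIcc] at hs
      have hs1 : s < 1 := lt_of_le_of_lt hs.2 hx1
      have h0 : (1 - s) ≠ 0 := ne_of_gt (by linarith)
      have hd : HasDerivAt (fun u : ℝ => 1 - u) (-1) s := by
        simpa using ((hasDerivAt_id s).const_sub (1:ℝ))
      have h3 := (hd.log h0).neg
      exact h3.congr_deriv (by ring)
    have hcont2 : ContinuousOn (fun s : ℝ => (1 - s)⁻¹) (Set.uIcc a x) := by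
      apply ContinuousOn.inv₀
      · fun_prop
      · intro s hs
        rw [huIcc] at hs
        have : s < 1 := lt_of_le_of_lt hs.2 hx1
        exact ne_of_gt (by linarith)
    rw [intervalIntegral.integral_eq_sub_of_hasDerivAt hderiv hcont2.intervalIntegrable]
    ring
  have houter : ‖∫ s in a..x, J s‖ ≤ E * (Real.log (1 - a) - Real.log (1 - x)) := by
    have hJnormint : IntervalIntegrable (fun s => ‖J s‖) volume a x := by
      apply ContinuousOn.intervalIntegrable
      rw [huIcc]; exact hJcont.norm
    have hrhscont : ContinuousOn (fun s : ℝ => E * (1 - s)⁻¹) (Set.uIcc a x) := by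
      apply ContinuousOn.mul continuousOn_const
      apply ContinuousOn.inv₀
      · fun_prop
      · intro s hs
        rw [huIcc] at hs
        have : s < 1 := lt_of_le_of_lt hs.2 hx1
        exact ne_of_gt (by linarith)
    calc ‖∫ s in a..x, J s‖ ≤ ∫ s in a..x, ‖J s‖ :=
        intervalIntegral.norm_integral_le_integral_norm haxle
      _ ≤ ∫ s in a..x, E * (1 - s)⁻¹ :=
        intervalIntegral.integral_mono_on haxle hJnormint hrhscont.intervalIntegrable hJbound
      _ = E * ∫ s in a..x, (1 - s)⁻¹ := intervalIntegral.integral_const_mul _ _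
      _ = E * (Real.log (1 - a) - Real.log (1 - x)) := by rw [hlog]
  -- final bound
  have hx2 : (0:ℝ) ≤ 1 - x^2 := by nlinarith
  have hnorm : ‖((1 - x^2 : ℝ) : ℂ) * f x‖ = (1 - x^2) * ‖f x‖ := by
    rw [norm_mul, Complex.norm_real, Real.norm_eq_abs, abs_of_nonneg hx2]
  have hfx : ‖f x‖ ≤ D + E * (Real.log (1 - a) - Real.log (1 - x)) := by
    rw [hrep]
    have hsm : ‖((x - a : ℝ) : ℂ) * f1 a‖ ≤ 2 * ‖f1 a‖ := by
      rw [norm_mul, Complex.norm_real, Real.norm_eq_abs, abs_of_nonneg (by linarith)]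
      have := norm_nonneg (f1 a)
      nlinarith
    calc ‖f a + ((x - a : ℝ) : ℂ) * f1 a + ∫ s in a..x, J s‖
        ≤ ‖f a‖ + ‖((x - a : ℝ) : ℂ) * f1 a‖ + ‖∫ s in a..x, J s‖ := norm_add₃_le
      _ ≤ ‖f a‖ + 2 * ‖f1 a‖ + E * (Real.log (1 - a) - Real.log (1 - x)) := by
          exact add_le_add (add_le_add le_rfl hsm) houter
      _ = D + E * (Real.log (1 - a) - Real.log (1 - x)) := by rw [hD]
  rw [hnorm]
  calc (1 - x^2) * ‖f x‖
      ≤ (1 - x^2) * (D + E * (Real.log (1 - a) - Real.log (1 - x))) :=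
        mul_le_mul_of_nonneg_left hfx hx2
    _ = G x := by rw [hG]; ring

/-- **Lemma (Littlejohn–Wicks).** If `f ∈ D(S)`, then
`lim_{x→1⁻} (1-x²)²f″(x) = 0` and `lim_{x→-1⁺} (1-x²)²f″(x) = 0`. -/
theorem sq_f2_tendsto_zero (f f1 f2 f3 f4 : ℝ → ℂ)
    (hf : DS f f1 f2 f3 f4) :
    Tendsto (fun x => (((1 - x^2)^2 : ℝ) : ℂ) * f2 x) atOne (nhds 0) ∧
    Tendsto (fun x => (((1 - x^2)^2 : ℝ) : ℂ) * f2 x) atNegOne (nhds 0) := by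
  obtain ⟨⟨h01, h12, h23, h34, hL2, hL2sq⟩, hb1p, hb1m, hbXp, hbXm⟩ := hf
  -- integrability of f on (-1,1)
  have hfi : IntegrableOn f (Ioo (-1:ℝ) 1) volume := by
    have h := hL2.mono_exponent (p := 1) (by norm_num)
    exact memLp_one_iff_integrable.mp h
  set C : ℝ := ∫ r in Ioo (-1:ℝ) 1, ‖f r‖ with hCdef
  have hCb : ∀ u v : ℝ, -1 < u → v < 1 → u ≤ v → (∫ r in u..v, ‖f r‖) ≤ C := by
    intro u v hu hv huv
    rw [intervalIntegral.integral_of_le huv]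
    apply setIntegral_mono_set hfi.norm (Filter.Eventually.of_forall fun r => norm_nonneg _)
    apply HasSubset.Subset.eventuallyLE
    intro r hr
    exact ⟨lt_trans hu hr.1, lt_of_le_of_lt hr.2 hv⟩
  have hkey_eq : ∀ x : ℝ, (x:ℂ) * bket1 f1 f2 f3 x - bketX f f1 f2 f3 x
      = (((1 - x^2)^2 : ℝ) : ℂ) * f2 x - ((2*(1 - x^2) : ℝ) : ℂ) * f x := by
    intro x; simp only [bketX]; push_cast; ring
  -- the combination [K] tends to zero at both endpoints
  have hKp : Tendsto (fun x => (((1 - x^2)^2 : ℝ) : ℂ) * f2 x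
      - ((2*(1 - x^2) : ℝ) : ℂ) * f x) atOne (nhds 0) := by
    have hcast : Tendsto (fun x : ℝ => (x:ℂ)) atOne (nhds 1) := by
      have h := Complex.continuous_ofReal.tendsto 1
      simpa using h.mono_left (by rw [atOne]; exact nhdsWithin_le_nhds)
    have h := (hcast.mul hb1p).sub hbXp
    simp only [mul_zero, sub_zero] at h
    exact h.congr hkey_eq
  have hKm : Tendsto (fun x => (((1 - x^2)^2 : ℝ) : ℂ) * f2 x
      - ((2*(1 - x^2) : ℝ) : ℂ) * f x) atNegOne (nhds 0) := by
    have hcast : Tendsto (fun x : ℝ => (x:ℂ)) atNegOne (nhds (-1)) := by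
      have h := Complex.continuous_ofReal.tendsto (-1)
      have h2 := h.mono_left (show atNegOne ≤ nhds (-1:ℝ) by
        rw [atNegOne]; exact nhdsWithin_le_nhds)
      simpa using h2
    have h := (hcast.mul hb1m).sub hbXm
    simp only [mul_zero, sub_zero] at h
    exact h.congr hkey_eq
  -- the `+1` endpoint
  obtain ⟨a, ha0, ha1, hKa⟩ := exists_bound_one _ hKp
  have hup : Tendsto (fun x => ((1 - x^2 : ℝ) : ℂ) * f x) atOne (nhds 0) :=
    key_lemma f f1 f2 a C ha0 ha1 h01 h12 hKa
      (fun s hs => hCb a s (by linarith) hs.2 hs.1)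
  have goal1 : Tendsto (fun x => (((1 - x^2)^2 : ℝ) : ℂ) * f2 x) atOne (nhds 0) := by
    have h := hKp.add (hup.const_mul (2:ℂ))
    simp only [add_zero, mul_zero] at h
    apply h.congr
    intro x; push_cast; ring
  -- the `-1` endpoint, via reflection
  have hg01 : LocACOn (fun x => f (-x)) (fun x => -f1 (-x)) := h01.reflect
  have hg12 : LocACOn (fun x => -f1 (-x)) (fun x => f2 (-x)) := by
    have h := (h12.reflect).neg'
    simpa only [neg_neg] using h
  have hKg : Tendsto (fun x => (((1 - x^2)^2 : ℝ) : ℂ) * f2 (-x)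
      - ((2*(1 - x^2) : ℝ) : ℂ) * f (-x)) atOne (nhds 0) := by
    have h := hKm.comp tendsto_neg_atOne
    apply h.congr
    intro x
    simp only [Function.comp_apply, neg_sq]
  obtain ⟨a, ha0, ha1, hKa⟩ := exists_bound_one _ hKg
  have hCg : ∀ s ∈ Ico a (1:ℝ), (∫ r in a..s, ‖f (-r)‖) ≤ C := by
    intro s hs
    have h : (∫ r in a..s, ‖f (-r)‖) = ∫ r in (-s)..(-a), ‖f r‖ :=
      intervalIntegral.integral_comp_neg (fun t => ‖f t‖)
    rw [h]
    exact hCb (-s) (-a) (by linarith [hs.2]) (by linarith) (by linarith [hs.1])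
  have hum : Tendsto (fun x => ((1 - x^2 : ℝ) : ℂ) * f (-x)) atOne (nhds 0) :=
    key_lemma _ _ _ a C ha0 ha1 hg01 hg12 hKa hCg
  have hum' : Tendsto (fun x => ((1 - x^2 : ℝ) : ℂ) * f x) atNegOne (nhds 0) := by
    have h := hum.comp tendsto_neg_atNegOne
    apply h.congr
    intro x
    simp only [Function.comp_apply, neg_sq, neg_neg]
  have goal2 : Tendsto (fun x => (((1 - x^2)^2 : ℝ) : ℂ) * f2 x) atNegOne (nhds 0) := by
    have h := hKm.add (hum'.const_mul (2:ℂ))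
    simp only [add_zero, mul_zero] at h
    apply h.congr
    intro x; push_cast; ring
  exact ⟨goal1, goal2⟩
end
end

section
/- Let c ∈ (0,1) and let f : (c,1) → ℝ with f′ locally absolutely continuous on (c,1) (so f″ exists a.e.) and f′ ∈ L²(c,1). If the limit L := lim_{x→1⁻}(1−x²)²f″(x) exists, then L = 0. -/
set_option maxHeartbeats 1000000

open MeasureTheory Set Filter

noncomputable section

/-- `f` is locally absolutely continuous on the set `s` with a.e. derivative `f'`,
expressed via the fundamental theorem of calculus. -/
def LocACOnI (f f' : ℝ → ℝ) (s : Set ℝ) : Prop :=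
  ∀ x ∈ s, ∀ y ∈ s,
    IntervalIntegrable f' volume x y ∧ f y - f x = ∫ t in x..y, f' t


lemma intble_inv_sq {x y : ℝ} (hy : y < 1) (hx : x ≤ y) :
    IntervalIntegrable (fun t => ((1-t)^2)⁻¹) volume x y := by
  apply ContinuousOn.intervalIntegrable
  apply ContinuousOn.inv₀ (by fun_prop)
  intro t ht
  rw [uIcc_of_le hx] at ht
  have : t < 1 := lt_of_le_of_lt ht.2 hy
  have : (0:ℝ) < 1 - t := by linarith
  positivity

lemma ftc_inv_sq {x y : ℝ} (hy : y < 1) (hx : x ≤ y) :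
    ∫ t in x..y, ((1-t)^2)⁻¹ = (1-y)⁻¹ - (1-x)⁻¹ := by
  apply intervalIntegral.integral_eq_sub_of_hasDerivAt
  · intro t ht
    rw [uIcc_of_le hx] at ht
    have h1 : (1:ℝ) - t ≠ 0 := by
      have : t < 1 := lt_of_le_of_lt ht.2 hy
      intro h; linarith
    have := (((hasDerivAt_id t).const_sub 1).inv h1)
    convert this using 1
    · rfl
    · ext s; simp
    · simp only [id]; ring
  · exact intble_inv_sq hy hx

lemma aux_pos (c : ℝ) (hc : c ∈ Ioo (0:ℝ) 1)
    (f' f'' : ℝ → ℝ)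
    (hf' : LocACOnI f' f'' (Ioo c 1))
    (hL2 : MemLp f' 2 (volume.restrict (Ioo c 1))) (L : ℝ)
    (hL : Tendsto (fun x => (1 - x^2)^2 * f'' x) (nhdsWithin 1 (Ioo c 1)) (nhds L))
    (hLpos : 0 < L) : False := by
  obtain ⟨hc0, hc1⟩ := hc
  have hint : IntegrableOn (fun x => f' x ^ 2) (Ioo c 1) volume := hL2.integrable_sq
  -- eventual lower bound on f''
  have hev : ∀ᶠ x in nhdsWithin 1 (Ioo c 1), L/2 < (1 - x^2)^2 * f'' x :=
    hL.eventually (eventually_gt_nhds (by linarith))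
  rw [eventually_nhdsWithin_iff, Metric.eventually_nhds_iff] at hev
  obtain ⟨δ, hδ, hP⟩ := hev
  obtain ⟨a, ha⟩ : ∃ a, a = max c (1 - δ) := ⟨_, rfl⟩
  obtain ⟨x₀, hx₀⟩ : ∃ x₀, x₀ = (a + 1) / 2 := ⟨_, rfl⟩
  have hax : a < 1 := by rw [ha]; exact max_lt hc1 (by linarith)
  have hca : c ≤ a := ha ▸ le_max_left _ _
  have haδ : 1 - δ ≤ a := ha ▸ le_max_right _ _
  have hx₀1 : x₀ < 1 := by rw [hx₀]; linarith
  have hax₀ : a < x₀ := by rw [hx₀]; linarith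
  have hcx₀ : c < x₀ := lt_of_le_of_lt hca hax₀
  have key : ∀ t ∈ Ico x₀ 1, L/2 < (1 - t^2)^2 * f'' t := by
    intro t ht
    apply hP
    · rw [Real.dist_eq, abs_sub_lt_iff]
      constructor
      · linarith [ht.2]
      · linarith [ht.1, hax₀]
    · exact ⟨lt_of_lt_of_le hcx₀ ht.1, ht.2⟩
  have hbound : ∀ t ∈ Ico x₀ 1, L/8 * ((1-t)^2)⁻¹ ≤ f'' t := by
    intro t ht
    have ht0 : 0 < t := lt_trans hc0 (lt_of_lt_of_le hcx₀ ht.1)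
    have ht1 : t < 1 := ht.2
    have h3 := key t ht
    have h1t2 : 0 < 1 - t^2 := by nlinarith
    have h1t : 0 < 1 - t := by linarith
    have h2 : 0 < (1 - t^2)^2 := by positivity
    have h4 : 0 < (1-t)^2 := by positivity
    have hf''pos : 0 < f'' t := by nlinarith
    have he : (1+t)^2 ≤ 4 := by nlinarith
    have h1 : (1 - t^2)^2 ≤ 4*(1-t)^2 := by
      calc (1 - t^2)^2 = (1-t)^2*(1+t)^2 := by ring
        _ ≤ (1-t)^2*4 := mul_le_mul_of_nonneg_left he (sq_nonneg _)
        _ = 4*(1-t)^2 := by ring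
    have h5 : L/2 < 4*(1-t)^2 * f'' t := by nlinarith
    rw [mul_comm, inv_mul_le_iff₀ h4]
    linarith
  -- lower bound on f'
  have hf'lb : ∀ y ∈ Ioo x₀ 1, f' x₀ + L/8 * ((1-y)⁻¹ - (1-x₀)⁻¹) ≤ f' y := by
    intro y hy
    have hx₀mem : x₀ ∈ Ioo c 1 := ⟨hcx₀, hx₀1⟩
    have hymem : y ∈ Ioo c 1 := ⟨lt_trans hcx₀ hy.1, hy.2⟩
    obtain ⟨hint'', heq⟩ := hf' x₀ hx₀mem y hymem
    have hmono : ∫ t in x₀..y, L/8 * ((1-t)^2)⁻¹ ≤ ∫ t in x₀..y, f'' t := by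
      apply intervalIntegral.integral_mono_on hy.1.le
        ((intble_inv_sq hy.2 hy.1.le).const_mul _) hint''
      intro t ht
      exact hbound t ⟨ht.1, lt_of_le_of_lt ht.2 hy.2⟩
    rw [intervalIntegral.integral_const_mul, ftc_inv_sq hy.2 hy.1.le] at hmono
    rw [← heq] at hmono
    linarith
  -- choose y₁
  obtain ⟨C, hC⟩ : ∃ C, C = L/8 * (1-x₀)⁻¹ - f' x₀ := ⟨_, rfl⟩
  obtain ⟨R₀, hR₀⟩ : ∃ R₀, R₀ = 16 * max C 0 / L + 1 := ⟨_, rfl⟩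
  have hmaxC : 0 ≤ max C 0 := le_max_right _ _
  have hR₀1 : 1 ≤ R₀ := by
    rw [hR₀]
    have : 0 ≤ 16 * max C 0 / L := by positivity
    linarith
  have hR₀pos : 0 < R₀ := by linarith
  have hR₀inv : 0 < R₀⁻¹ := by positivity
  obtain ⟨y₁, hy₁⟩ : ∃ y₁, y₁ = max ((x₀+1)/2) (1 - R₀⁻¹) := ⟨_, rfl⟩
  have hy₁x₀ : x₀ < y₁ := by
    rw [hy₁]; exact lt_of_lt_of_le (by linarith) (le_max_left _ _)
  have hy₁1 : y₁ < 1 := by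
    rw [hy₁]; exact max_lt (by linarith) (by linarith)
  have hy₁R : 1 - y₁ ≤ R₀⁻¹ := by
    have := hy₁ ▸ le_max_right ((x₀+1)/2) (1 - R₀⁻¹)
    linarith
  have h1y₁ : 0 < 1 - y₁ := by linarith
  have hL16 : 0 < L/16 := by linarith
  -- final lower bound on f' on [y₁, 1)
  have hf'lb2 : ∀ t ∈ Ico y₁ 1, L/16 * (1-t)⁻¹ ≤ f' t := by
    intro t ht
    have htmem : t ∈ Ioo x₀ 1 := ⟨lt_of_lt_of_le hy₁x₀ ht.1, ht.2⟩
    have h1t : 0 < 1 - t := by linarith [ht.2]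
    have hR : R₀ ≤ (1-t)⁻¹ := by
      rw [← inv_inv R₀]
      apply inv_anti₀ h1t
      calc 1 - t ≤ 1 - y₁ := by linarith [ht.1]
        _ ≤ R₀⁻¹ := hy₁R
    have hCb : C ≤ L/16 * (1-t)⁻¹ := by
      have h1 : L/16 * R₀ ≤ L/16 * (1-t)⁻¹ :=
        mul_le_mul_of_nonneg_left hR (by linarith)
      have h2 : L/16 * R₀ = max C 0 + L/16 := by
        rw [hR₀]; field_simp
      have h3 : C ≤ max C 0 := le_max_left _ _
      linarith
    have hmain := hf'lb t htmem
    have hexp : f' x₀ + L/8 * ((1-t)⁻¹ - (1-x₀)⁻¹) = L/8 * (1-t)⁻¹ - C := by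
      rw [hC]; ring
    rw [hexp] at hmain
    have hinvpos : 0 < (1-t)⁻¹ := by positivity
    nlinarith
  -- the integral bound
  obtain ⟨I, hI⟩ : ∃ I, I = ∫ x in Ioo c 1, f' x ^ 2 := ⟨_, rfl⟩
  have hI0 : 0 ≤ I := hI ▸ setIntegral_nonneg measurableSet_Ioo (fun x _ => sq_nonneg _)
  have hK : 0 < (L/16)^2 := by positivity
  have hbnd : ∀ b ∈ Ioo y₁ 1, (L/16)^2 * ((1-b)⁻¹ - (1-y₁)⁻¹) ≤ I := by
    intro b hb
    have hsub : Ioc y₁ b ⊆ Ioo c 1 := fun t ht =>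
      ⟨lt_trans (lt_trans hcx₀ hy₁x₀) ht.1, lt_of_le_of_lt ht.2 hb.2⟩
    have hsub' : uIcc y₁ b ⊆ Ioo c 1 := by
      rw [uIcc_of_le hb.1.le]
      intro t ht
      exact ⟨lt_of_lt_of_le (lt_trans hcx₀ hy₁x₀) ht.1, lt_of_le_of_lt ht.2 hb.2⟩
    have hintf2 : IntervalIntegrable (fun t => f' t ^ 2) volume y₁ b :=
      (hint.mono_set hsub').intervalIntegrable
    have h1 : ∫ t in y₁..b, (L/16)^2 * ((1-t)^2)⁻¹ ≤ ∫ t in y₁..b, f' t ^ 2 := by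
      apply intervalIntegral.integral_mono_on hb.1.le
        ((intble_inv_sq hb.2 hb.1.le).const_mul _) hintf2
      intro t ht
      have ht' : t ∈ Ico y₁ 1 := ⟨ht.1, lt_of_le_of_lt ht.2 hb.2⟩
      have h2 := hf'lb2 t ht'
      have h1t : 0 < 1 - t := by linarith [ht'.2]
      have hpos : 0 < L/16 * (1-t)⁻¹ := by positivity
      calc (L/16)^2 * ((1-t)^2)⁻¹ = (L/16 * (1-t)⁻¹)^2 := by
            rw [mul_pow, inv_pow]
        _ ≤ f' t ^ 2 := pow_le_pow_left₀ hpos.le h2 2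
    rw [intervalIntegral.integral_const_mul, ftc_inv_sq hb.2 hb.1.le] at h1
    have h2 : ∫ t in y₁..b, f' t ^ 2 ≤ I := by
      rw [intervalIntegral.integral_of_le hb.1.le, hI]
      apply setIntegral_mono_set hint
      · exact Eventually.of_forall (fun x => sq_nonneg _)
      · exact HasSubset.Subset.eventuallyLE hsub
    linarith
  -- contradiction
  have hIK : 0 ≤ I / (L/16)^2 := by positivity
  obtain ⟨R, hR⟩ : ∃ R, R = I / (L/16)^2 + (1-y₁)⁻¹ + 1 := ⟨_, rfl⟩
  have hy₁inv : 0 < (1-y₁)⁻¹ := by positivity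
  have hRpos : 0 < R := by rw [hR]; linarith
  obtain ⟨b, hb⟩ : ∃ b, b = 1 - R⁻¹ := ⟨_, rfl⟩
  have hRinv : 0 < R⁻¹ := by positivity
  have hbmem : b ∈ Ioo y₁ 1 := by
    constructor
    · rw [hb]
      have h1 : R⁻¹ < 1 - y₁ := by
        rw [← inv_inv (1 - y₁)]
        apply inv_strictAnti₀ (by positivity)
        rw [hR]; linarith
      linarith
    · rw [hb]; linarith
  have hfin := hbnd b hbmem
  have hbR : (1-b)⁻¹ = R := by
    rw [hb, show (1:ℝ) - (1 - R⁻¹) = R⁻¹ by ring, inv_inv]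
  rw [hbR, hR] at hfin
  have hfield : (L/16)^2 * (I/(L/16)^2) = I := by field_simp
  have hexp2 : (L/16)^2 * (I / (L/16)^2 + (1-y₁)⁻¹ + 1 - (1-y₁)⁻¹)
      = I + (L/16)^2 := by
    rw [show I / (L/16)^2 + (1-y₁)⁻¹ + 1 - (1-y₁)⁻¹ = I / (L/16)^2 + 1 by ring,
      mul_add, hfield, mul_one]
  rw [hexp2] at hfin
  linarith

/-- Let `c ∈ (0,1)` and `f : (c,1) → ℝ` with `f′` locally absolutely continuous
and `f′ ∈ L²(c,1)`. If `L = lim_{x→1⁻} (1-x²)²f″(x)` exists, then `L = 0`. -/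
theorem limit_of_sq_second_deriv_eq_zero (c : ℝ) (hc : c ∈ Ioo (0:ℝ) 1)
    (f f' f'' : ℝ → ℝ)
    (hf : LocACOnI f f' (Ioo c 1)) (hf' : LocACOnI f' f'' (Ioo c 1))
    (hL2 : MemLp f' 2 (volume.restrict (Ioo c 1))) (L : ℝ)
    (hL : Tendsto (fun x => (1 - x^2)^2 * f'' x) (nhdsWithin 1 (Ioo c 1)) (nhds L)) :
    L = 0 := by
  by_contra hLne
  rcases lt_or_gt_of_ne hLne with hneg | hpos
  · refine aux_pos c hc (fun x => -f' x) (fun x => -f'' x) ?_ hL2.neg (-L) ?_ (by linarith)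
    · intro x hx y hy
      obtain ⟨h1, h2⟩ := hf' x hx y hy
      refine ⟨h1.neg, ?_⟩
      rw [intervalIntegral.integral_neg, ← h2]
      ring
    · simpa [mul_neg] using hL.neg
  · exact aux_pos c hc f' f'' hf' hL2 L hL hpos
end
end

section
/- There exists a constant C > 0 such that for every g ∈ L²(0,1), the function x ↦ (1/(1−x²))∫_x^1 g(t) dt belongs to L²(0,1) and ‖(1/(1−x²))∫_x^1 g(t) dt‖_{L²(0,1)} ≤ C‖g‖_{L²(0,1)}. -/
open MeasureTheory Set Filter

noncomputable section

open intervalIntegral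
open scoped ENNReal

namespace CEaux

lemma intervalIntegrable_inv_sqrt (x : ℝ) :
    IntervalIntegrable (fun t : ℝ => (1 - t) ^ (-(1/2) : ℝ)) volume x 1 := by
  have h := (intervalIntegrable_rpow' (a := 1 - x) (b := 1 - 1) (r := (-(1/2):ℝ)) (by norm_num)).comp_sub_left 1
  simpa using h

lemma integral_inv_sqrt (x : ℝ) (hx1 : x ≤ 1) :
    ∫ t in x..1, (1 - t) ^ (-(1/2) : ℝ) = 2 * Real.sqrt (1 - x) := by
  rw [show (fun t : ℝ => (1 - t) ^ (-(1/2) : ℝ)) = fun t : ℝ => (fun s : ℝ => s ^ (-(1/2):ℝ)) (1 - t) from rfl]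
  rw [integral_comp_sub_left (fun s : ℝ => s ^ (-(1/2):ℝ)) 1]
  rw [integral_rpow (Or.inl (by norm_num))]
  rw [Real.sqrt_eq_rpow]
  rw [show ((1:ℝ) - 1) = 0 by norm_num, show (-(1/2:ℝ) + 1) = (1/2:ℝ) by norm_num,
    Real.zero_rpow (by norm_num)]
  ring

lemma intervalIntegrable_pow32 (t : ℝ) (ht1 : t < 1) :
    IntervalIntegrable (fun x : ℝ => (1 - x) ^ (-(3/2) : ℝ)) volume 0 t := by
  have h := (intervalIntegrable_rpow (a := 1 - 0) (b := 1 - t) (r := (-(3/2):ℝ))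
    (Or.inr (by
      intro h
      rw [mem_uIcc] at h
      rcases h with h | h <;> linarith [h.1, h.2]))).comp_sub_left 1
  simpa using h

lemma integral_pow32 (t : ℝ) (ht1 : t < 1) :
    ∫ x in (0:ℝ)..t, (1 - x) ^ (-(3/2) : ℝ) = 2 * (1 - t) ^ (-(1/2):ℝ) - 2 := by
  rw [show (fun x : ℝ => (1 - x) ^ (-(3/2) : ℝ)) = fun x : ℝ => (fun s : ℝ => s ^ (-(3/2):ℝ)) (1 - x) from rfl]
  rw [integral_comp_sub_left (fun s : ℝ => s ^ (-(3/2):ℝ)) 1]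
  rw [integral_rpow (Or.inr ⟨by norm_num, by
      intro h
      rw [mem_uIcc] at h
      rcases h with h | h <;> linarith [h.1, h.2]⟩)]
  rw [show (-(3/2:ℝ) + 1) = (-(1/2:ℝ)) by norm_num, show ((1:ℝ) - 0) = 1 by norm_num, Real.one_rpow]
  ring

end CEaux

namespace Test
open CEaux
lemma lintegral_inv_sqrt {x : ℝ} (hx0 : 0 < x) (hx1 : x < 1) :
    ∫⁻ t in Ioo x 1, ENNReal.ofReal ((1-t) ^ (-(1/2):ℝ))
      = ENNReal.ofReal (2 * Real.sqrt (1 - x)) := by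
  rw [Measure.restrict_congr_set Ioo_ae_eq_Ioc]
  rw [← ofReal_integral_eq_lintegral_ofReal]
  · rw [← intervalIntegral.integral_of_le hx1.le, integral_inv_sqrt x hx1.le]
  · have := (intervalIntegrable_inv_sqrt x)
    rwa [intervalIntegrable_iff, uIoc_of_le hx1.le] at this
  · refine (ae_restrict_iff' measurableSet_Ioc).mpr (ae_of_all _ fun t ht => ?_)
    exact Real.rpow_nonneg (by linarith [ht.2]) _

lemma lintegral_pow32_le {t : ℝ} (ht0 : 0 < t) (ht1 : t < 1) :
    ∫⁻ x in Ioo 0 t, ENNReal.ofReal (2 * (1-x) ^ (-(3/2):ℝ))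
      ≤ ENNReal.ofReal (4 * (1-t) ^ (-(1/2):ℝ)) := by
  rw [Measure.restrict_congr_set Ioo_ae_eq_Ioc]
  rw [← ofReal_integral_eq_lintegral_ofReal]
  · apply ENNReal.ofReal_le_ofReal
    rw [← intervalIntegral.integral_of_le ht0.le, intervalIntegral.integral_const_mul,
      integral_pow32 t ht1]
    have h2 : (0:ℝ) ≤ (1-t) ^ (-(1/2):ℝ) := Real.rpow_nonneg (by linarith) _
    nlinarith
  · have := ((intervalIntegrable_pow32 t ht1).const_mul 2)
    rwa [intervalIntegrable_iff, uIoc_of_le ht0.le] at this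
  · refine (ae_restrict_iff' measurableSet_Ioc).mpr (ae_of_all _ fun x hx => ?_)
    have : (0:ℝ) ≤ (1-x) ^ (-(3/2):ℝ) := Real.rpow_nonneg (by linarith [hx.2, ht1]) _
    simp only [Pi.zero_apply]
    linarith
end Test

namespace Test

def hw (g : ℝ → ℂ) (t : ℝ) : ℝ≥0∞ :=
  (‖g t‖₊ : ℝ≥0∞) ^ (2:ℝ) * ENNReal.ofReal ((1-t) ^ ((1/2):ℝ))

lemma hw_measurable (g : ℝ → ℂ) (hgm : Measurable g) : Measurable (hw g) :=
  ((hgm.nnnorm.coe_nnreal_ennreal).pow_const _).mul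
    (ENNReal.measurable_ofReal.comp ((measurable_const.sub measurable_id).pow_const _))

lemma real_coeff {s : ℝ} (hs : 0 < s) :
    (s⁻¹) ^ (2:ℝ) * (2 * Real.sqrt s) = 2 * s ^ (-(3/2):ℝ) := by
  rw [Real.sqrt_eq_rpow, ← Real.rpow_neg_one s, ← Real.rpow_mul hs.le,
    mul_left_comm, ← Real.rpow_add hs]
  norm_num

lemma holder_pointwise (g : ℝ → ℂ) (hgm : Measurable g) {x : ℝ} (hx : x ∈ Ioo (0:ℝ) 1) :
    (‖(((1 - x^2)⁻¹ : ℝ) : ℂ) * ∫ t in x..(1:ℝ), g t‖₊ : ℝ≥0∞) ^ (2:ℝ)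
      ≤ ENNReal.ofReal (2 * (1-x) ^ (-(3/2):ℝ)) * ∫⁻ t in Ioo x 1, hw g t := by
  obtain ⟨hx0, hx1⟩ := hx
  have hs0 : (0:ℝ) < 1 - x := by linarith
  set I := ∫⁻ t in Ioo x 1, hw g t with hI
  -- norm of the scalar factor
  have e1 : (‖(((1 - x^2)⁻¹ : ℝ) : ℂ)‖₊ : ℝ≥0∞) ≤ ENNReal.ofReal ((1-x)⁻¹) := by
    rw [Complex.nnnorm_real, ← enorm_eq_nnnorm, Real.enorm_eq_ofReal (inv_nonneg.mpr (by nlinarith))]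
    exact ENNReal.ofReal_le_ofReal (inv_anti₀ hs0 (by nlinarith))
  -- norm of the integral
  have e2 : (‖∫ t in x..(1:ℝ), g t‖₊ : ℝ≥0∞) ≤ ∫⁻ t in Ioo x 1, (‖g t‖₊ : ℝ≥0∞) := by
    rw [intervalIntegral.integral_of_le hx1.le, Measure.restrict_congr_set Ioo_ae_eq_Ioc]
    exact enorm_integral_le_lintegral_enorm _
  -- Cauchy-Schwarz
  have hCS : (∫⁻ t in Ioo x 1, (‖g t‖₊ : ℝ≥0∞))
      ≤ I ^ ((1:ℝ)/2) * (ENNReal.ofReal (2 * Real.sqrt (1-x))) ^ ((1:ℝ)/2) := by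
    have hconj : Real.HolderConjugate 2 2 := Real.HolderConjugate.two_two
    set u : ℝ → ℝ≥0∞ := fun t => (‖g t‖₊ : ℝ≥0∞) * ENNReal.ofReal ((1-t) ^ ((1/4):ℝ)) with hu
    set v : ℝ → ℝ≥0∞ := fun t => ENNReal.ofReal ((1-t) ^ (-(1/4):ℝ)) with hv
    have hum : AEMeasurable u (volume.restrict (Ioo x 1)) :=
      ((hgm.nnnorm.coe_nnreal_ennreal).mul
        (ENNReal.measurable_ofReal.comp ((measurable_const.sub measurable_id).pow_const _))).aemeasurable
    have hvm : AEMeasurable v (volume.restrict (Ioo x 1)) :=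
      (ENNReal.measurable_ofReal.comp ((measurable_const.sub measurable_id).pow_const _)).aemeasurable
    have h1 : (∫⁻ t in Ioo x 1, (‖g t‖₊ : ℝ≥0∞)) = ∫⁻ t in Ioo x 1, (u * v) t := by
      refine lintegral_congr_ae ((ae_restrict_iff' measurableSet_Ioo).mpr
        (ae_of_all _ fun t ht => ?_))
      have h1t : (0:ℝ) < 1 - t := by linarith [ht.2]
      simp only [hu, hv, Pi.mul_apply]
      rw [mul_assoc, ← ENNReal.ofReal_mul (Real.rpow_nonneg h1t.le _), ← Real.rpow_add h1t]
      norm_num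
    have h2 : (∫⁻ t in Ioo x 1, u t ^ (2:ℝ)) = I := by
      rw [hI]
      refine lintegral_congr_ae ((ae_restrict_iff' measurableSet_Ioo).mpr
        (ae_of_all _ fun t ht => ?_))
      have h1t : (0:ℝ) < 1 - t := by linarith [ht.2]
      rw [hu]
      simp only []
      rw [ENNReal.mul_rpow_of_nonneg _ _ (by norm_num : (0:ℝ) ≤ 2),
        ENNReal.ofReal_rpow_of_nonneg (Real.rpow_nonneg h1t.le _) (by norm_num),
        ← Real.rpow_mul h1t.le]
      norm_num [hw]
    have h3 : (∫⁻ t in Ioo x 1, v t ^ (2:ℝ)) = ENNReal.ofReal (2 * Real.sqrt (1-x)) := by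
      rw [← lintegral_inv_sqrt hx0 hx1]
      refine lintegral_congr_ae ((ae_restrict_iff' measurableSet_Ioo).mpr
        (ae_of_all _ fun t ht => ?_))
      have h1t : (0:ℝ) < 1 - t := by linarith [ht.2]
      rw [hv]
      simp only []
      rw [ENNReal.ofReal_rpow_of_nonneg (Real.rpow_nonneg h1t.le _) (by norm_num),
        ← Real.rpow_mul h1t.le]
      norm_num
    calc (∫⁻ t in Ioo x 1, (‖g t‖₊ : ℝ≥0∞)) = ∫⁻ t in Ioo x 1, (u * v) t := h1
      _ ≤ (∫⁻ t in Ioo x 1, u t ^ (2:ℝ)) ^ ((1:ℝ)/2) * (∫⁻ t in Ioo x 1, v t ^ (2:ℝ)) ^ ((1:ℝ)/2) :=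
          ENNReal.lintegral_mul_le_Lp_mul_Lq _ hconj hum hvm
      _ = I ^ ((1:ℝ)/2) * (ENNReal.ofReal (2 * Real.sqrt (1-x))) ^ ((1:ℝ)/2) := by rw [h2, h3]
  -- assemble
  calc (‖(((1 - x^2)⁻¹ : ℝ) : ℂ) * ∫ t in x..(1:ℝ), g t‖₊ : ℝ≥0∞) ^ (2:ℝ)
      = ((‖(((1 - x^2)⁻¹ : ℝ) : ℂ)‖₊ : ℝ≥0∞) * (‖∫ t in x..(1:ℝ), g t‖₊ : ℝ≥0∞)) ^ (2:ℝ) := by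
        rw [nnnorm_mul, ENNReal.coe_mul]
    _ ≤ (ENNReal.ofReal ((1-x)⁻¹) * (I ^ ((1:ℝ)/2) * (ENNReal.ofReal (2 * Real.sqrt (1-x))) ^ ((1:ℝ)/2))) ^ (2:ℝ) :=
        ENNReal.rpow_le_rpow (mul_le_mul' e1 (e2.trans hCS)) (by norm_num)
    _ = ENNReal.ofReal ((1-x)⁻¹) ^ (2:ℝ) * (I ^ ((1:ℝ)/2)) ^ (2:ℝ) * ((ENNReal.ofReal (2 * Real.sqrt (1-x))) ^ ((1:ℝ)/2)) ^ (2:ℝ) := by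
        rw [ENNReal.mul_rpow_of_nonneg _ _ (by norm_num : (0:ℝ) ≤ 2),
          ENNReal.mul_rpow_of_nonneg _ _ (by norm_num : (0:ℝ) ≤ 2), mul_assoc]
    _ = ENNReal.ofReal ((1-x)⁻¹) ^ (2:ℝ) * I * ENNReal.ofReal (2 * Real.sqrt (1-x)) := by
        rw [← ENNReal.rpow_mul, ← ENNReal.rpow_mul]
        norm_num
    _ = ENNReal.ofReal (2 * (1-x) ^ (-(3/2):ℝ)) * I := by
        rw [ENNReal.ofReal_rpow_of_nonneg (inv_nonneg.mpr hs0.le) (by norm_num : (0:ℝ) ≤ 2),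
          mul_right_comm, ← ENNReal.ofReal_mul (Real.rpow_nonneg (inv_nonneg.mpr hs0.le) _),
          real_coeff hs0]

end Test

namespace Test

lemma swap_bound (g : ℝ → ℂ) (hgm : Measurable g) :
    (∫⁻ x in Ioo (0:ℝ) 1, ENNReal.ofReal (2 * (1-x) ^ (-(3/2):ℝ)) * ∫⁻ t in Ioo x 1, hw g t)
      ≤ 4 * ∫⁻ t in Ioo (0:ℝ) 1, (‖g t‖₊ : ℝ≥0∞) ^ (2:ℝ) := by
  set c : ℝ → ℝ≥0∞ := fun x => ENNReal.ofReal (2 * (1-x) ^ (-(3/2):ℝ)) with hc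
  have hcm : Measurable c := ENNReal.measurable_ofReal.comp
    (measurable_const.mul ((measurable_const.sub measurable_id).pow_const _))
  set S : Set (ℝ × ℝ) := {p : ℝ × ℝ | p.1 < p.2 ∧ p.2 < 1} with hSdef
  have hS : MeasurableSet S :=
    (measurableSet_lt measurable_fst measurable_snd).inter
      (measurableSet_lt measurable_snd measurable_const)
  set Φ : ℝ × ℝ → ℝ≥0∞ := S.indicator (fun p => c p.1 * hw g p.2) with hΦ
  have hΦm : Measurable Φ :=
    (((hcm.comp measurable_fst).mul ((hw_measurable g hgm).comp measurable_snd)).indicator hS)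
  have step1 : ∀ x : ℝ, (∫⁻ t, Φ (x, t)) = c x * ∫⁻ t in Ioo x 1, hw g t := by
    intro x
    have e : (fun t => Φ (x, t)) = (Ioo x 1).indicator (fun t => c x * hw g t) := by
      funext t
      by_cases h : t ∈ Ioo x 1
      · rw [Set.indicator_of_mem h, hΦ, Set.indicator_of_mem (by exact ⟨h.1, h.2⟩)]
      · rw [Set.indicator_of_notMem h, hΦ, Set.indicator_of_notMem
          (by simpa [hSdef, mem_Ioo] using h)]
    rw [e, lintegral_indicator measurableSet_Ioo,
      lintegral_const_mul _ (hw_measurable g hgm)]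
  have swap : (∫⁻ x in Ioo (0:ℝ) 1, ∫⁻ t, Φ (x, t))
      = ∫⁻ t, ∫⁻ x in Ioo (0:ℝ) 1, Φ (x, t) :=
    lintegral_lintegral_swap (hΦm.aemeasurable)
  have inner_zero : ∀ t : ℝ, t ∉ Ioo (0:ℝ) 1 → (∫⁻ x in Ioo (0:ℝ) 1, Φ (x, t)) = 0 := by
    intro t ht
    have h0 : ∀ x ∈ Ioo (0:ℝ) 1, Φ (x, t) = 0 := by
      intro x hx
      refine Set.indicator_of_notMem ?_ _
      rintro ⟨h1, h2⟩
      exact ht ⟨lt_trans hx.1 h1, h2⟩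
    calc (∫⁻ x in Ioo (0:ℝ) 1, Φ (x, t)) = ∫⁻ _ in Ioo (0:ℝ) 1, 0 :=
          lintegral_congr_ae ((ae_restrict_iff' measurableSet_Ioo).mpr (ae_of_all _ h0))
      _ = 0 := lintegral_zero
  have inner_bound : ∀ t ∈ Ioo (0:ℝ) 1,
      (∫⁻ x in Ioo (0:ℝ) 1, Φ (x, t)) ≤ 4 * (‖g t‖₊ : ℝ≥0∞) ^ (2:ℝ) := by
    intro t ht
    have h1t : (0:ℝ) < 1 - t := by linarith [ht.2]
    have e : (fun x => Φ (x, t)) = (Iio t).indicator (fun x => c x * hw g t) := by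
      funext x
      by_cases h : x < t
      · rw [Set.indicator_of_mem (by exact h : x ∈ Iio t), hΦ,
          Set.indicator_of_mem (by exact ⟨h, ht.2⟩)]
      · rw [Set.indicator_of_notMem (by exact h : x ∉ Iio t), hΦ,
          Set.indicator_of_notMem (by
            intro hmem
            exact h hmem.1)]
    have hset : Iio t ∩ Ioo (0:ℝ) 1 = Ioo 0 t := by
      ext y
      simp only [mem_inter_iff, mem_Iio, mem_Ioo]
      constructor
      · rintro ⟨h1, h2, h3⟩; exact ⟨h2, h1⟩
      · rintro ⟨h1, h2⟩; exact ⟨h2, h1, lt_trans h2 ht.2⟩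
    have hfinal : ENNReal.ofReal (4 * (1-t) ^ (-(1/2):ℝ)) * hw g t
        = 4 * (‖g t‖₊ : ℝ≥0∞) ^ (2:ℝ) := by
      rw [hw, mul_left_comm,
        ← ENNReal.ofReal_mul (mul_nonneg (by norm_num) (Real.rpow_nonneg h1t.le _)),
        show 4 * (1-t) ^ (-(1/2):ℝ) * (1-t) ^ ((1/2):ℝ)
          = 4 * ((1-t) ^ (-(1/2):ℝ) * (1-t) ^ ((1/2):ℝ)) from by ring,
        ← Real.rpow_add h1t]
      norm_num [mul_comm]
    calc (∫⁻ x in Ioo (0:ℝ) 1, Φ (x, t))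
        = ∫⁻ x in Ioo (0:ℝ) 1, (Iio t).indicator (fun x => c x * hw g t) x := by rw [e]
      _ = ∫⁻ x in Ioo (0:ℝ) t, c x * hw g t := by
          rw [lintegral_indicator measurableSet_Iio,
            Measure.restrict_restrict measurableSet_Iio, hset]
      _ = (∫⁻ x in Ioo (0:ℝ) t, c x) * hw g t := lintegral_mul_const _ hcm
      _ ≤ ENNReal.ofReal (4 * (1-t) ^ (-(1/2):ℝ)) * hw g t :=
          mul_le_mul_left (lintegral_pow32_le ht.1 ht.2) _
      _ = 4 * (‖g t‖₊ : ℝ≥0∞) ^ (2:ℝ) := hfinal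
  calc (∫⁻ x in Ioo (0:ℝ) 1, c x * ∫⁻ t in Ioo x 1, hw g t)
      = ∫⁻ x in Ioo (0:ℝ) 1, ∫⁻ t, Φ (x, t) := lintegral_congr fun x => (step1 x).symm
    _ = ∫⁻ t, ∫⁻ x in Ioo (0:ℝ) 1, Φ (x, t) := swap
    _ = ∫⁻ t, (Ioo (0:ℝ) 1).indicator (fun t => ∫⁻ x in Ioo (0:ℝ) 1, Φ (x, t)) t := by
        refine lintegral_congr fun t => ?_
        by_cases ht : t ∈ Ioo (0:ℝ) 1
        · rw [Set.indicator_of_mem ht]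
        · rw [Set.indicator_of_notMem ht, inner_zero t ht]
    _ = ∫⁻ t in Ioo (0:ℝ) 1, ∫⁻ x in Ioo (0:ℝ) 1, Φ (x, t) :=
        lintegral_indicator measurableSet_Ioo _
    _ ≤ ∫⁻ t in Ioo (0:ℝ) 1, 4 * (‖g t‖₊ : ℝ≥0∞) ^ (2:ℝ) :=
        lintegral_mono_ae ((ae_restrict_iff' measurableSet_Ioo).mpr (ae_of_all _ inner_bound))
    _ = 4 * ∫⁻ t in Ioo (0:ℝ) 1, (‖g t‖₊ : ℝ≥0∞) ^ (2:ℝ) :=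
        lintegral_const_mul _ ((hgm.nnnorm.coe_nnreal_ennreal).pow_const _)

end Test

namespace Test

lemma key (g : ℝ → ℂ) (hgm : Measurable g) :
    (∫⁻ x in Ioo (0:ℝ) 1,
        (‖(((1 - x^2)⁻¹ : ℝ) : ℂ) * ∫ t in x..(1:ℝ), g t‖₊ : ℝ≥0∞) ^ (2:ℝ))
      ≤ 4 * ∫⁻ t in Ioo (0:ℝ) 1, (‖g t‖₊ : ℝ≥0∞) ^ (2:ℝ) :=
  le_trans (lintegral_mono_ae ((ae_restrict_iff' measurableSet_Ioo).mpr
    (ae_of_all _ fun x hx => holder_pointwise g hgm hx))) (swap_bound g hgm)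

lemma norm_bound (g : ℝ → ℂ) (hgm : Measurable g) :
    eLpNorm (fun x => (((1 - x^2)⁻¹ : ℝ) : ℂ) * ∫ t in x..(1:ℝ), g t) 2
        (volume.restrict (Ioo (0:ℝ) 1))
      ≤ ENNReal.ofReal 2 * eLpNorm g 2 (volume.restrict (Ioo (0:ℝ) 1)) := by
  rw [eLpNorm_eq_lintegral_rpow_enorm_toReal (by norm_num) (by norm_num),
    eLpNorm_eq_lintegral_rpow_enorm_toReal (by norm_num) (by norm_num)]
  simp only [ENNReal.toReal_ofNat]
  calc (∫⁻ x in Ioo (0:ℝ) 1,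
          (‖(((1 - x^2)⁻¹ : ℝ) : ℂ) * ∫ t in x..(1:ℝ), g t‖₊ : ℝ≥0∞) ^ (2:ℝ)) ^ (1/(2:ℝ))
      ≤ (4 * ∫⁻ t in Ioo (0:ℝ) 1, (‖g t‖₊ : ℝ≥0∞) ^ (2:ℝ)) ^ (1/(2:ℝ)) :=
        ENNReal.rpow_le_rpow (key g hgm) (by norm_num)
    _ = (4:ℝ≥0∞) ^ (1/(2:ℝ)) * (∫⁻ t in Ioo (0:ℝ) 1, (‖g t‖₊ : ℝ≥0∞) ^ (2:ℝ)) ^ (1/(2:ℝ)) :=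
        ENNReal.mul_rpow_of_nonneg _ _ (by norm_num)
    _ = ENNReal.ofReal 2 * (∫⁻ t in Ioo (0:ℝ) 1, (‖g t‖₊ : ℝ≥0∞) ^ (2:ℝ)) ^ (1/(2:ℝ)) := by
        congr 1
        rw [show (4:ℝ≥0∞) = (2:ℝ≥0∞) ^ (2:ℕ) by norm_num, ← ENNReal.rpow_natCast,
          ← ENNReal.rpow_mul]
        norm_num

lemma aesm_aux (g : ℝ → ℂ) (hgi : IntegrableOn g (Icc (0:ℝ) 1) volume) :
    AEStronglyMeasurable (fun x => (((1 - x^2)⁻¹ : ℝ) : ℂ) * ∫ t in x..(1:ℝ), g t)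
      (volume.restrict (Ioo (0:ℝ) 1)) := by
  apply ContinuousOn.aestronglyMeasurable ?_ measurableSet_Ioo
  apply ContinuousOn.mul
  · apply Complex.continuous_ofReal.comp_continuousOn
    apply ContinuousOn.inv₀
    · exact (continuous_const.sub (continuous_pow 2)).continuousOn
    · intro x hx
      have := hx.1; have := hx.2
      nlinarith
  · have h := intervalIntegral.continuousOn_primitive_interval_left (μ := volume)
      (a := (0:ℝ)) (b := (1:ℝ)) (f := g) (by rwa [uIcc_of_le zero_le_one])
    rw [uIcc_of_le zero_le_one] at h
    exact h.mono Ioo_subset_Icc_self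

end Test


/-- There is a constant `C > 0` such that for every `g ∈ L²(0,1)` the function
`x ↦ (1/(1-x²))∫_x^1 g(t) dt` belongs to `L²(0,1)` with norm at most `C‖g‖`. -/
theorem CE_application_one : ∃ C : ℝ, 0 < C ∧
    ∀ g : ℝ → ℂ, MemLp g 2 (volume.restrict (Ioo (0:ℝ) 1)) →
      MemLp (fun x => (((1 - x^2)⁻¹ : ℝ) : ℂ) * ∫ t in x..(1:ℝ), g t) 2
        (volume.restrict (Ioo (0:ℝ) 1)) ∧
      eLpNorm (fun x => (((1 - x^2)⁻¹ : ℝ) : ℂ) * ∫ t in x..(1:ℝ), g t) 2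
          (volume.restrict (Ioo (0:ℝ) 1))
        ≤ ENNReal.ofReal C * eLpNorm g 2 (volume.restrict (Ioo (0:ℝ) 1)) := by
  refine ⟨2, by norm_num, fun g hg => ?_⟩
  haveI : IsFiniteMeasure (volume.restrict (Ioo (0:ℝ) 1)) :=
    ⟨by rw [Measure.restrict_apply_univ]; simp [Real.volume_Ioo]⟩
  set g' : ℝ → ℂ := hg.1.mk g with hg'def
  have hg'm : Measurable g' := hg.1.stronglyMeasurable_mk.measurable
  have heq : g =ᵐ[volume.restrict (Ioo (0:ℝ) 1)] g' := hg.1.ae_eq_mk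
  have hg' : MemLp g' 2 (volume.restrict (Ioo (0:ℝ) 1)) := hg.ae_eq heq
  have hg'i : IntegrableOn g' (Icc (0:ℝ) 1) volume := by
    rw [integrableOn_Icc_iff_integrableOn_Ioo]
    exact memLp_one_iff_integrable.mp (hg'.mono_exponent one_le_two)
  -- the two functions agree on (0,1)
  have hff' : ∀ x ∈ Ioo (0:ℝ) 1,
      (((1 - x^2)⁻¹ : ℝ) : ℂ) * ∫ t in x..(1:ℝ), g t
        = (((1 - x^2)⁻¹ : ℝ) : ℂ) * ∫ t in x..(1:ℝ), g' t := by
    intro x hx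
    have h1 : ∀ᵐ t ∂(volume : Measure ℝ), t ∈ Ioo (0:ℝ) 1 → g t = g' t :=
      (ae_restrict_iff' measurableSet_Ioo).mp heq
    have h2 : ∀ᵐ t ∂(volume : Measure ℝ), t ≠ (1:ℝ) := by
      rw [ae_iff]
      convert Real.volume_singleton (a := (1:ℝ)) using 2
      ext y
      simp
    have hint : ∫ t in x..(1:ℝ), g t = ∫ t in x..(1:ℝ), g' t := by
      apply intervalIntegral.integral_congr_ae
      filter_upwards [h1, h2] with t h1t h2t hmem
      rw [uIoc_of_le hx.2.le] at hmem
      exact h1t ⟨lt_trans hx.1 hmem.1, lt_of_le_of_ne hmem.2 h2t⟩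
    rw [hint]
  have hae : (fun x => (((1 - x^2)⁻¹ : ℝ) : ℂ) * ∫ t in x..(1:ℝ), g t)
      =ᵐ[volume.restrict (Ioo (0:ℝ) 1)]
      (fun x => (((1 - x^2)⁻¹ : ℝ) : ℂ) * ∫ t in x..(1:ℝ), g' t) :=
    (ae_restrict_iff' measurableSet_Ioo).mpr (ae_of_all _ hff')
  have hbound := Test.norm_bound g' hg'm
  have hmem' : MemLp (fun x => (((1 - x^2)⁻¹ : ℝ) : ℂ) * ∫ t in x..(1:ℝ), g' t) 2
      (volume.restrict (Ioo (0:ℝ) 1)) := by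
    refine ⟨Test.aesm_aux g' hg'i, lt_of_le_of_lt hbound ?_⟩
    exact ENNReal.mul_lt_top ENNReal.ofReal_lt_top hg'.2
  refine ⟨hmem'.ae_eq hae.symm, ?_⟩
  rw [eLpNorm_congr_ae hae, eLpNorm_congr_ae heq]
  exact hbound
end
end

section
/- There exists a constant C > 0 such that for every g ∈ L²(0,1), the function x ↦ (1/(1−x²)²)∫_x^1 (1−t²) g(t) dt belongs to L²(0,1) and ‖(1/(1−x²)²)∫_x^1 (1−t²)g(t) dt‖_{L²(0,1)} ≤ C‖g‖_{L²(0,1)}. -/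
open MeasureTheory Set Filter
open scoped ENNReal NNReal

noncomputable section

private lemma CE2_aux_ineq (x : ℝ) (hx : x ∈ Ioo (0:ℝ) 1) :
    (((1 - x^2)^2)⁻¹)^2 * (2*(1-x)^2) ≤ 2 * ((1-x)⁻¹)^2 := by
  obtain ⟨h0, h1⟩ := hx
  have ha : (0:ℝ) < 1 - x := by linarith
  have hab : 1 - x^2 = (1-x)*(1+x) := by ring
  have key : (((1 - x^2)^2)⁻¹)^2 * (2*(1-x)^2) = 2 * ((1-x)⁻¹)^2 * (((1+x)^4)⁻¹) := by
    rw [hab]; field_simp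
  rw [key]
  have h4 : ((1+x)^4)⁻¹ ≤ 1 := by
    rw [inv_le_one_iff₀]; right; nlinarith
  calc 2 * ((1-x)⁻¹)^2 * (((1+x)^4)⁻¹) ≤ 2 * ((1-x)⁻¹)^2 * 1 := by
        apply mul_le_mul_of_nonneg_left h4; positivity
    _ = 2 * ((1-x)⁻¹)^2 := by ring

private lemma CE2_aux_ftc1 (x : ℝ) : ∫ t in x..(1:ℝ), 4*(1-t) = 2*(1-x)^2 := by
  have hd : ∀ t ∈ uIcc x 1, HasDerivAt (fun t : ℝ => -(2*(1-t)^2)) (4*(1-t)) t := by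
    intro t _
    have hder : HasDerivAt (fun t : ℝ => -(2*(1-t)^2)) (-(2*(2*(1-t)*(-1)))) t := by
      apply HasDerivAt.neg
      apply HasDerivAt.const_mul
      have := ((hasDerivAt_id t).const_sub 1).fun_pow 2
      simpa using this
    convert hder using 1; ring
  rw [intervalIntegral.integral_eq_sub_of_hasDerivAt hd]
  · ring
  · exact Continuous.intervalIntegrable (by fun_prop) _ _

private lemma CE2_aux_ftc2 (t : ℝ) (ht0 : 0 < t) (ht1 : t < 1) :
    ∫ x in (0:ℝ)..t, 2*((1-x)⁻¹)^2 = 2*(1-t)⁻¹ - 2 := by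
  have hsub : uIcc (0:ℝ) t ⊆ Iio 1 := by
    rw [uIcc_of_le ht0.le]; intro y hy; exact lt_of_le_of_lt hy.2 ht1
  have hcont : ContinuousOn (fun y : ℝ => 2*((1-y)⁻¹)^2) (uIcc (0:ℝ) t) := by
    apply ContinuousOn.mul continuousOn_const
    apply ContinuousOn.pow
    apply ContinuousOn.inv₀
    · fun_prop
    · intro y hy; have := hsub hy; simp only [mem_Iio] at this; intro hc; linarith
  have hderiv : ∀ y ∈ uIcc (0:ℝ) t, HasDerivAt (fun y : ℝ => 2*(1-y)⁻¹) (2*((1-y)⁻¹)^2) y := by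
    intro y hy
    have hne : (1:ℝ) - y ≠ 0 := by
      have := hsub hy; simp only [mem_Iio] at this; intro hc; linarith
    have hder : HasDerivAt (fun y : ℝ => (1-y)⁻¹) (-(-1)/((1-y)^2)) y :=
      ((hasDerivAt_id y).const_sub 1).inv hne
    have h2 := hder.const_mul 2
    rw [show 2*((1-y)⁻¹)^2 = 2 * (-(-1)/((1-y)^2)) by rw [neg_neg, one_div, inv_pow]]; exact h2
  rw [intervalIntegral.integral_eq_sub_of_hasDerivAt hderiv]
  · simp
  · exact hcont.intervalIntegrable

private lemma CE2_aux_contOn (t : ℝ) (ht0 : 0 < t) (ht1 : t < 1) :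
    ContinuousOn (fun y : ℝ => 2*((1-y)⁻¹)^2) (uIcc (0:ℝ) t) := by
  have hsub : uIcc (0:ℝ) t ⊆ Iio 1 := by
    rw [uIcc_of_le ht0.le]; intro y hy; exact lt_of_le_of_lt hy.2 ht1
  apply ContinuousOn.mul continuousOn_const
  apply ContinuousOn.pow
  apply ContinuousOn.inv₀
  · fun_prop
  · intro y hy; have := hsub hy; simp only [mem_Iio] at this; intro hc; linarith

set_option maxHeartbeats 1000000 in
/-- There is a constant `C > 0` such that for every `g ∈ L²(0,1)` the function
`x ↦ (1/(1-x²)²)∫_x^1 (1-t²)g(t) dt` belongs to `L²(0,1)` with norm at most `C‖g‖`. -/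
theorem CE_application_two : ∃ C : ℝ, 0 < C ∧
    ∀ g : ℝ → ℂ, MemLp g 2 (volume.restrict (Ioo (0:ℝ) 1)) →
      MemLp (fun x => ((((1 - x^2)^2)⁻¹ : ℝ) : ℂ) *
          ∫ t in x..(1:ℝ), ((1 - t^2 : ℝ) : ℂ) * g t) 2
        (volume.restrict (Ioo (0:ℝ) 1)) ∧
      eLpNorm (fun x => ((((1 - x^2)^2)⁻¹ : ℝ) : ℂ) *
            ∫ t in x..(1:ℝ), ((1 - t^2 : ℝ) : ℂ) * g t) 2
          (volume.restrict (Ioo (0:ℝ) 1))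
        ≤ ENNReal.ofReal C * eLpNorm g 2 (volume.restrict (Ioo (0:ℝ) 1)) := by
  refine ⟨2, by norm_num, ?_⟩
  intro g hg
  set μ : Measure ℝ := volume.restrict (Ioo (0:ℝ) 1) with hμ
  haveI : IsFiniteMeasure μ := by
    constructor
    rw [hμ, Measure.restrict_apply_univ, Real.volume_Ioo]
    exact ENNReal.ofReal_lt_top
  obtain ⟨g', hg'sm, hgg'⟩ := hg.1
  have hg'mem : MemLp g' 2 μ := hg.ae_eq hgg'
  set h : ℝ → ℂ := (Ioo (0:ℝ) 1).indicator (fun t => ((1 - t^2 : ℝ) : ℂ) * g' t) with hh_def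
  -- integrability of h
  have hmem2 : MemLp (fun t => ((1 - t^2 : ℝ) : ℂ) * g' t) 2 μ := by
    have haesm : AEStronglyMeasurable (fun t => ((1 - t^2 : ℝ) : ℂ) * g' t) μ :=
      (Complex.continuous_ofReal.comp (by continuity)).aestronglyMeasurable.mul
        hg'sm.aestronglyMeasurable
    refine hg'mem.of_le_mul (c := 1) haesm ?_
    filter_upwards [ae_restrict_mem measurableSet_Ioo] with t ht
    rw [norm_mul, Complex.norm_real]
    have h1 : ‖(1 - t^2 : ℝ)‖ ≤ 1 := by
      rw [Real.norm_eq_abs, abs_le]; constructor <;> nlinarith [ht.1, ht.2]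
    calc ‖(1 - t^2 : ℝ)‖ * ‖g' t‖ ≤ 1 * ‖g' t‖ :=
          mul_le_mul_of_nonneg_right h1 (norm_nonneg _)
      _ = 1 * ‖g' t‖ := rfl
  have hint : Integrable (fun t => ((1 - t^2 : ℝ) : ℂ) * g' t) μ :=
    memLp_one_iff_integrable.mp (hmem2.mono_exponent (by norm_num))
  have hh_int : Integrable h volume := by
    rw [hh_def, integrable_indicator_iff measurableSet_Ioo]
    exact hint
  set F : ℝ → ℂ := fun x => ∫ t in x..(1:ℝ), h t with hF_def
  have hFcont : Continuous F := by
    have h1 : Continuous (fun x : ℝ => ∫ t in (1:ℝ)..x, h t) := hh_int.continuous_primitive 1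
    have : F = fun x => -∫ t in (1:ℝ)..x, h t := by
      funext x; exact intervalIntegral.integral_symm 1 x
    rw [this]; exact h1.neg
  set f' : ℝ → ℂ := fun x => ((((1 - x^2)^2)⁻¹ : ℝ) : ℂ) * F x with hf'_def
  have hf'cont : ContinuousOn f' (Ioo (0:ℝ) 1) := by
    apply ContinuousOn.mul ?_ hFcont.continuousOn
    apply Continuous.comp_continuousOn Complex.continuous_ofReal
    apply ContinuousOn.inv₀
    · fun_prop
    · intro x hx
      have : (0:ℝ) < 1 - x^2 := by nlinarith [hx.1, hx.2]
      positivity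
  -- pointwise equality of target and f' on Ioo 0 1
  have hae_ne_one : ∀ᵐ (t : ℝ), t ≠ 1 := by
    rw [ae_iff]
    have : {t : ℝ | ¬ t ≠ 1} = {1} := by ext t; simp
    rw [this]
    exact measure_singleton 1
  have hg_ae : ∀ᵐ t ∂(volume : Measure ℝ), t ∈ Ioo (0:ℝ) 1 → g t = g' t :=
    ae_imp_of_ae_restrict hgg'
  have hfeq : ∀ x ∈ Ioo (0:ℝ) 1,
      ((((1 - x^2)^2)⁻¹ : ℝ) : ℂ) * ∫ t in x..(1:ℝ), ((1 - t^2 : ℝ) : ℂ) * g t = f' x := by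
    intro x hx
    rw [hf'_def]
    congr 1
    apply intervalIntegral.integral_congr_ae
    filter_upwards [hg_ae, hae_ne_one] with t ht ht1 htmem
    rw [uIoc_of_le hx.2.le] at htmem
    have htI : t ∈ Ioo (0:ℝ) 1 := ⟨lt_trans hx.1 htmem.1, lt_of_le_of_ne htmem.2 ht1⟩
    rw [hh_def, indicator_of_mem htI, ht htI]
  have hae : (fun x => ((((1 - x^2)^2)⁻¹ : ℝ) : ℂ) *
      ∫ t in x..(1:ℝ), ((1 - t^2 : ℝ) : ℂ) * g t) =ᵐ[μ] f' := by
    filter_upwards [ae_restrict_mem measurableSet_Ioo] with x hx using hfeq x hx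
  have hf'aesm : AEStronglyMeasurable f' μ :=
    hf'cont.aestronglyMeasurable measurableSet_Ioo
  have haesm : AEStronglyMeasurable (fun x => ((((1 - x^2)^2)⁻¹ : ℝ) : ℂ) *
      ∫ t in x..(1:ℝ), ((1 - t^2 : ℝ) : ℂ) * g t) μ := hf'aesm.congr hae.symm
  -- ENNReal setup
  set G : ℝ → ℝ≥0∞ := fun t => (‖g' t‖₊ : ℝ≥0∞) with hG_def
  have hGmeas : Measurable G := hg'sm.measurable.enorm
  set Φ : ℝ → ℝ≥0∞ := fun t => ENNReal.ofReal (1 - t) * G t ^ (2:ℝ) with hΦ_def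
  have hΦmeas : Measurable Φ := by
    apply Measurable.mul
    · exact ENNReal.measurable_ofReal.comp (by fun_prop)
    · exact hGmeas.pow_const _
  -- MAIN pointwise bound
  have key : ∀ x ∈ Ioo (0:ℝ) 1, (‖f' x‖₊ : ℝ≥0∞) ^ (2:ℝ) ≤
      ENNReal.ofReal (2 * ((1-x)⁻¹)^2) * ∫⁻ t in Ioc x 1, Φ t := by
    intro x hx
    have hx1 : (0:ℝ) < 1 - x := by linarith [hx.2]
    have hxsq : (0:ℝ) < 1 - x^2 := by nlinarith [hx.1, hx.2]
    have hc_nonneg : (0:ℝ) ≤ ((1 - x^2)^2)⁻¹ := by positivity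
    set f₁ : ℝ → ℝ≥0∞ := fun t => ENNReal.ofReal (2 * Real.sqrt (1-t)) with hf₁_def
    set f₂ : ℝ → ℝ≥0∞ := fun t => ENNReal.ofReal (Real.sqrt (1-t)) * G t with hf₂_def
    have hf₁meas : Measurable f₁ :=
      ENNReal.measurable_ofReal.comp (by fun_prop)
    have hf₂meas : Measurable f₂ :=
      (ENNReal.measurable_ofReal.comp (by fun_prop)).mul hGmeas
    have hnorm : (‖f' x‖₊ : ℝ≥0∞) =
        ENNReal.ofReal (((1 - x^2)^2)⁻¹) * (‖F x‖₊ : ℝ≥0∞) := by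
      rw [hf'_def]
      simp only [nnnorm_mul, ENNReal.coe_mul, Complex.nnnorm_real]
      rw [← enorm_eq_nnnorm, Real.enorm_eq_ofReal hc_nonneg]
    have stepF : (‖F x‖₊ : ℝ≥0∞) ≤ ∫⁻ t in Ioc x 1, (‖h t‖₊ : ℝ≥0∞) := by
      rw [hF_def]
      simp only
      rw [intervalIntegral.integral_of_le hx.2.le]
      exact enorm_integral_le_lintegral_enorm _
    have step2 : ∫⁻ t in Ioc x 1, (‖h t‖₊ : ℝ≥0∞) ≤ ∫⁻ t in Ioc x 1, f₁ t * f₂ t := by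
      apply setLIntegral_mono' measurableSet_Ioc
      intro t ht
      have ht0 : 0 < t := lt_trans hx.1 ht.1
      have hfmul : f₁ t * f₂ t = ENNReal.ofReal (2*(1-t)) * G t := by
        rw [hf₁_def, hf₂_def, ← mul_assoc,
          ← ENNReal.ofReal_mul (by positivity)]
        congr 2
        rw [mul_assoc, Real.mul_self_sqrt (by linarith [ht.2])]
      rw [hfmul]
      by_cases hteq : t = 1
      · subst hteq
        rw [hh_def]
        rw [indicator_of_notMem (by norm_num : (1:ℝ) ∉ Ioo (0:ℝ) 1)]
        simp
      · have htI : t ∈ Ioo (0:ℝ) 1 := ⟨ht0, lt_of_le_of_ne ht.2 hteq⟩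
        rw [hh_def, indicator_of_mem htI]
        rw [nnnorm_mul, ENNReal.coe_mul, Complex.nnnorm_real, ← enorm_eq_nnnorm,
          Real.enorm_eq_ofReal (by nlinarith [htI.1, htI.2] : (0:ℝ) ≤ 1 - t^2)]
        apply mul_le_mul_left
        apply ENNReal.ofReal_le_ofReal
        nlinarith [htI.1, htI.2]
    have hconj : Real.HolderConjugate 2 2 := Real.HolderConjugate.two_two
    have hHolder := ENNReal.lintegral_mul_le_Lp_mul_Lq (volume.restrict (Ioc x 1)) hconj
      hf₁meas.aemeasurable hf₂meas.aemeasurable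
    simp only [Pi.mul_apply] at hHolder
    have step4 : ∫⁻ t in Ioc x 1, f₁ t ^ (2:ℝ) = ENNReal.ofReal (2*(1-x)^2) := by
      have hcong : ∀ t ∈ Ioc x 1, f₁ t ^ (2:ℝ) = ENNReal.ofReal (4*(1-t)) := by
        intro t ht
        rw [hf₁_def]
        simp only
        rw [ENNReal.ofReal_rpow_of_nonneg (by positivity) (by norm_num : (0:ℝ) ≤ 2)]
        congr 1
        rw [show (2:ℝ) = ((2:ℕ):ℝ) by norm_num, Real.rpow_natCast]
        rw [mul_pow, Real.sq_sqrt (by linarith [ht.2])]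
        ring
      rw [setLIntegral_congr_fun measurableSet_Ioc hcong]
      rw [← ofReal_integral_eq_lintegral_ofReal]
      · congr 1
        rw [← intervalIntegral.integral_of_le hx.2.le]
        exact CE2_aux_ftc1 x
      · exact (Continuous.integrableOn_Ioc (by fun_prop))
      · filter_upwards [ae_restrict_mem measurableSet_Ioc] with t ht
        have := ht.2; simp only [Pi.zero_apply]; linarith
    have step5 : ∫⁻ t in Ioc x 1, f₂ t ^ (2:ℝ) = ∫⁻ t in Ioc x 1, Φ t := by
      apply setLIntegral_congr_fun measurableSet_Ioc
      intro t ht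
      rw [hf₂_def, hΦ_def]
      simp only
      rw [ENNReal.mul_rpow_of_nonneg _ _ (by norm_num : (0:ℝ) ≤ 2)]
      congr 1
      rw [ENNReal.ofReal_rpow_of_nonneg (Real.sqrt_nonneg _) (by norm_num : (0:ℝ) ≤ 2)]
      congr 1
      rw [show (2:ℝ) = ((2:ℕ):ℝ) by norm_num, Real.rpow_natCast]
      exact Real.sq_sqrt (by linarith [ht.2])
    have hF2 : (‖F x‖₊ : ℝ≥0∞) ≤ (ENNReal.ofReal (2*(1-x)^2)) ^ (1/(2:ℝ)) *
        (∫⁻ t in Ioc x 1, Φ t) ^ (1/(2:ℝ)) := by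
      calc (‖F x‖₊ : ℝ≥0∞) ≤ ∫⁻ t in Ioc x 1, (‖h t‖₊ : ℝ≥0∞) := stepF
        _ ≤ ∫⁻ t in Ioc x 1, f₁ t * f₂ t := step2
        _ ≤ (∫⁻ t in Ioc x 1, f₁ t ^ (2:ℝ)) ^ (1/(2:ℝ)) *
            (∫⁻ t in Ioc x 1, f₂ t ^ (2:ℝ)) ^ (1/(2:ℝ)) := hHolder
        _ = (ENNReal.ofReal (2*(1-x)^2)) ^ (1/(2:ℝ)) *
            (∫⁻ t in Ioc x 1, Φ t) ^ (1/(2:ℝ)) := by rw [step4, step5]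
    calc (‖f' x‖₊ : ℝ≥0∞) ^ (2:ℝ)
        = (ENNReal.ofReal (((1 - x^2)^2)⁻¹)) ^ (2:ℝ) * (‖F x‖₊ : ℝ≥0∞) ^ (2:ℝ) := by
          rw [hnorm, ENNReal.mul_rpow_of_nonneg _ _ (by norm_num : (0:ℝ) ≤ 2)]
      _ ≤ (ENNReal.ofReal (((1 - x^2)^2)⁻¹)) ^ (2:ℝ) *
          ((ENNReal.ofReal (2*(1-x)^2)) ^ (1/(2:ℝ)) *
            (∫⁻ t in Ioc x 1, Φ t) ^ (1/(2:ℝ))) ^ (2:ℝ) := by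
          apply mul_le_mul_right
          exact ENNReal.rpow_le_rpow hF2 (by norm_num)
      _ = (ENNReal.ofReal (((1 - x^2)^2)⁻¹)) ^ (2:ℝ) *
          (ENNReal.ofReal (2*(1-x)^2) * ∫⁻ t in Ioc x 1, Φ t) := by
          congr 1
          rw [ENNReal.mul_rpow_of_nonneg _ _ (by norm_num : (0:ℝ) ≤ 2),
            ← ENNReal.rpow_mul, ← ENNReal.rpow_mul]
          norm_num
      _ = ENNReal.ofReal ((((1 - x^2)^2)⁻¹)^2 * (2*(1-x)^2)) * ∫⁻ t in Ioc x 1, Φ t := by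
          rw [ENNReal.ofReal_rpow_of_nonneg hc_nonneg (by norm_num : (0:ℝ) ≤ 2), ← mul_assoc,
            ← ENNReal.ofReal_mul (by positivity)]
          congr 3
          rw [show (2:ℝ) = ((2:ℕ):ℝ) by norm_num, Real.rpow_natCast]
      _ ≤ ENNReal.ofReal (2 * ((1-x)⁻¹)^2) * ∫⁻ t in Ioc x 1, Φ t := by
          apply mul_le_mul_left
          apply ENNReal.ofReal_le_ofReal
          exact CE2_aux_ineq x hx
  -- Fubini/Tonelli bound
  have fubini : ∫⁻ x in Ioo (0:ℝ) 1, ENNReal.ofReal (2 * ((1-x)⁻¹)^2) *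
      ∫⁻ t in Ioc x 1, Φ t ≤ ENNReal.ofReal 2 * ∫⁻ t in Ioo (0:ℝ) 1, G t ^ (2:ℝ) := by
    set W : ℝ → ℝ≥0∞ := fun x => ENNReal.ofReal (2 * ((1-x)⁻¹)^2) with hW_def
    have hWmeas : Measurable W := ENNReal.measurable_ofReal.comp (by fun_prop)
    set K : ℝ → ℝ → ℝ≥0∞ := fun x t => W x * (Ioi x).indicator Φ t with hK_def
    have hrw1 : ∀ x ∈ Ioo (0:ℝ) 1, W x * ∫⁻ t in Ioc x 1, Φ t = ∫⁻ t in Ioc (0:ℝ) 1, K x t := by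
      intro x hx
      rw [hK_def]
      simp only
      rw [lintegral_const_mul' _ _ ENNReal.ofReal_ne_top]
      congr 1
      have hset : Ioi x ∩ Ioc (0:ℝ) 1 = Ioc x 1 := by
        ext t
        simp only [mem_inter_iff, mem_Ioi, mem_Ioc]
        constructor
        · rintro ⟨h1, _, h3⟩; exact ⟨h1, h3⟩
        · rintro ⟨h1, h2⟩; exact ⟨h1, lt_trans hx.1 h1, h2⟩
      rw [lintegral_indicator measurableSet_Ioi, Measure.restrict_restrict measurableSet_Ioi,
        hset]
    have hKmeas : AEMeasurable (Function.uncurry K)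
        ((volume.restrict (Ioo (0:ℝ) 1)).prod (volume.restrict (Ioc (0:ℝ) 1))) := by
      apply Measurable.aemeasurable
      have huncurry : Function.uncurry K = fun p : ℝ × ℝ =>
          W p.1 * ({q : ℝ × ℝ | q.1 < q.2}.indicator (fun q => Φ q.2) p) := by
        funext p
        simp only [Function.uncurry, hK_def, indicator_apply, mem_Ioi, mem_setOf_eq]
      rw [huncurry]
      exact (hWmeas.comp measurable_fst).mul
        ((hΦmeas.comp measurable_snd).indicator (measurableSet_lt measurable_fst measurable_snd))
    have hinner : ∀ t ∈ Ioc (0:ℝ) 1, ∫⁻ x in Ioo (0:ℝ) 1, K x t ≤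
        ENNReal.ofReal 2 * G t ^ (2:ℝ) := by
      intro t ht
      have hrw : ∀ x, K x t = (Iio t).indicator (fun x => W x * Φ t) x := by
        intro x
        simp only [hK_def, indicator_apply, mem_Ioi, mem_Iio]
        by_cases hxt : x < t
        · simp [hxt]
        · simp [hxt]
      have hstep : ∫⁻ x in Ioo (0:ℝ) 1, K x t = (∫⁻ x in Ioo 0 t, W x) * Φ t := by
        calc ∫⁻ x in Ioo (0:ℝ) 1, K x t
            = ∫⁻ x in Ioo (0:ℝ) 1, (Iio t).indicator (fun x => W x * Φ t) x :=
              lintegral_congr fun x => hrw x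
          _ = ∫⁻ x in Ioo 0 t, W x * Φ t := by
              have hset2 : Iio t ∩ Ioo (0:ℝ) 1 = Ioo 0 t := by
                ext y
                simp only [mem_inter_iff, mem_Iio, mem_Ioo]
                constructor
                · rintro ⟨h1, h2, _⟩; exact ⟨h2, h1⟩
                · rintro ⟨h1, h2⟩; exact ⟨h2, h1, lt_of_lt_of_le h2 ht.2⟩
              rw [lintegral_indicator measurableSet_Iio,
                Measure.restrict_restrict measurableSet_Iio, hset2]
          _ = (∫⁻ x in Ioo 0 t, W x) * Φ t := lintegral_mul_const _ hWmeas
      rw [hstep]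
      by_cases ht1 : t = 1
      · subst ht1
        have hΦ1 : Φ 1 = 0 := by rw [hΦ_def]; simp
        rw [hΦ1, mul_zero]
        exact zero_le
      · have htlt : t < 1 := lt_of_le_of_ne ht.2 ht1
        have ht0 : (0:ℝ) < 1 - t := by linarith
        have hcont : ContinuousOn (fun y : ℝ => 2*((1-y)⁻¹)^2) (uIcc (0:ℝ) t) :=
          CE2_aux_contOn t ht.1 htlt
        have hWint : ∫⁻ x in Ioo 0 t, W x ≤ ENNReal.ofReal (2*(1-t)⁻¹) := by
          calc ∫⁻ x in Ioo 0 t, W x ≤ ∫⁻ x in Ioc 0 t, W x :=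
                lintegral_mono_set Ioo_subset_Ioc_self
            _ = ENNReal.ofReal (∫ x in Ioc 0 t, 2*((1-x)⁻¹)^2) := by
                rw [← ofReal_integral_eq_lintegral_ofReal]
                · have hcont' : ContinuousOn (fun y : ℝ => 2*((1-y)⁻¹)^2) (Icc 0 t) := by
                    rw [← uIcc_of_le ht.1.le]; exact hcont
                  exact hcont'.integrableOn_Icc.mono_set Ioc_subset_Icc_self
                · exact Filter.Eventually.of_forall fun y => by positivity
            _ = ENNReal.ofReal (2*(1-t)⁻¹ - 2) := by
                congr 1
                rw [← intervalIntegral.integral_of_le ht.1.le]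
                exact CE2_aux_ftc2 t ht.1 htlt
            _ ≤ ENNReal.ofReal (2*(1-t)⁻¹) := ENNReal.ofReal_le_ofReal (by linarith)
        calc (∫⁻ x in Ioo 0 t, W x) * Φ t ≤ ENNReal.ofReal (2*(1-t)⁻¹) * Φ t :=
              mul_le_mul_left hWint _
          _ = ENNReal.ofReal (2*(1-t)⁻¹ * (1-t)) * G t ^ (2:ℝ) := by
              rw [hΦ_def]
              simp only
              rw [← mul_assoc, ← ENNReal.ofReal_mul (by positivity)]
          _ = ENNReal.ofReal 2 * G t ^ (2:ℝ) := by
              congr 2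
              field_simp
    calc ∫⁻ x in Ioo (0:ℝ) 1, ENNReal.ofReal (2 * ((1-x)⁻¹)^2) * ∫⁻ t in Ioc x 1, Φ t
        = ∫⁻ x in Ioo (0:ℝ) 1, ∫⁻ t in Ioc (0:ℝ) 1, K x t := by
          apply lintegral_congr_ae
          filter_upwards [ae_restrict_mem measurableSet_Ioo] with x hx using hrw1 x hx
      _ = ∫⁻ t in Ioc (0:ℝ) 1, ∫⁻ x in Ioo (0:ℝ) 1, K x t := lintegral_lintegral_swap hKmeas
      _ ≤ ∫⁻ t in Ioc (0:ℝ) 1, ENNReal.ofReal 2 * G t ^ (2:ℝ) := by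
          apply lintegral_mono_ae
          filter_upwards [ae_restrict_mem measurableSet_Ioc] with t ht using hinner t ht
      _ = ENNReal.ofReal 2 * ∫⁻ t in Ioc (0:ℝ) 1, G t ^ (2:ℝ) :=
          lintegral_const_mul' _ _ ENNReal.ofReal_ne_top
      _ = ENNReal.ofReal 2 * ∫⁻ t in Ioo (0:ℝ) 1, G t ^ (2:ℝ) := by
          rw [setLIntegral_congr (Ioo_ae_eq_Ioc (a := (0:ℝ)) (b := 1)).symm]
  -- assemble
  have total : ∫⁻ x, (‖f' x‖₊ : ℝ≥0∞) ^ (2:ℝ) ∂μ ≤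
      ENNReal.ofReal 2 * ∫⁻ t, G t ^ (2:ℝ) ∂μ := by
    refine le_trans (lintegral_mono_ae ?_) fubini
    filter_upwards [ae_restrict_mem measurableSet_Ioo] with x hx using key x hx
  have hG2 : ∫⁻ t, G t ^ (2:ℝ) ∂μ = eLpNorm g 2 μ ^ (2:ℝ) := by
    rw [eLpNorm_eq_lintegral_rpow_enorm_toReal (by norm_num) (by norm_num)]
    rw [← ENNReal.rpow_mul]
    norm_num
    apply lintegral_congr_ae
    filter_upwards [hgg'] with t ht
    rw [hG_def, ht]
    rfl
  have heLp : eLpNorm (fun x => ((((1 - x^2)^2)⁻¹ : ℝ) : ℂ) *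
      ∫ t in x..(1:ℝ), ((1 - t^2 : ℝ) : ℂ) * g t) 2 μ ≤
      ENNReal.ofReal 2 * eLpNorm g 2 μ := by
    rw [eLpNorm_congr_ae hae]
    rw [eLpNorm_eq_lintegral_rpow_enorm_toReal (by norm_num) (by norm_num)]
    have h2 : ((2:ℝ≥0∞)).toReal = (2:ℝ) := by norm_num
    rw [h2]
    calc (∫⁻ x, (‖f' x‖₊ : ℝ≥0∞) ^ (2:ℝ) ∂μ) ^ (1/(2:ℝ))
        ≤ (ENNReal.ofReal 2 * eLpNorm g 2 μ ^ (2:ℝ)) ^ (1/(2:ℝ)) := by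
          apply ENNReal.rpow_le_rpow _ (by norm_num)
          rw [← hG2]; exact total
      _ = (ENNReal.ofReal 2) ^ (1/(2:ℝ)) * eLpNorm g 2 μ := by
          rw [ENNReal.mul_rpow_of_nonneg _ _ (by norm_num), ← ENNReal.rpow_mul]
          norm_num
      _ ≤ ENNReal.ofReal 2 * eLpNorm g 2 μ := by
          apply mul_le_mul_left
          calc (ENNReal.ofReal 2) ^ (1/(2:ℝ)) ≤ (ENNReal.ofReal 2) ^ (1:ℝ) := by
                apply ENNReal.rpow_le_rpow_of_exponent_le
                · rw [show ((1:ℝ≥0∞)) = ENNReal.ofReal 1 by simp]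
                  exact ENNReal.ofReal_le_ofReal (by norm_num)
                · norm_num
            _ = ENNReal.ofReal 2 := ENNReal.rpow_one _
  refine ⟨⟨haesm, ?_⟩, heLp⟩
  exact lt_of_le_of_lt heLp (ENNReal.mul_lt_top ENNReal.ofReal_lt_top hg.2)
end
end
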